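/- arXiv:1906.09804 — 4 statements merged into one kernel-verified Lean document; each statement's English description precedes it below -/
import Mathlib

section
/- If f : [0,1] → ℝ is continuous, D⁺f(x) ≥ 0 for Lebesgue-almost every x, and D⁺f(x) > −∞ for every x ∈ [0,1), then f is non-decreasing. -/
open MeasureTheory Filter Set

/-- Upper right Dini derivative of `f` at `t` (restricted to the domain `[0,1]`). -/
noncomputable def DR (f : ℝ → ℝ) (t : ℝ) : EReal :=
  Filter.limsup (fun x => (((f x - f t) / (x - t) : ℝ) : EReal)) (nhdsWithin t (Set.Ioc t 1))

/-- Lower right Dini derivative. -/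
noncomputable def Dr (f : ℝ → ℝ) (t : ℝ) : EReal :=
  Filter.liminf (fun x => (((f x - f t) / (x - t) : ℝ) : EReal)) (nhdsWithin t (Set.Ioc t 1))

/-- Upper left Dini derivative. -/
noncomputable def DL (f : ℝ → ℝ) (t : ℝ) : EReal :=
  Filter.limsup (fun x => (((f x - f t) / (x - t) : ℝ) : EReal)) (nhdsWithin t (Set.Ico 0 t))

/-- Lower left Dini derivative. -/
noncomputable def Dl (f : ℝ → ℝ) (t : ℝ) : EReal :=
  Filter.liminf (fun x => (((f x - f t) / (x - t) : ℝ) : EReal)) (nhdsWithin t (Set.Ico 0 t))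


lemma meas_ne_top (V : Set ℝ) (x : ℝ) : volume (V ∩ Ioc 0 x) ≠ ⊤ := by
  apply ne_top_of_le_ne_top _ (measure_mono (inter_subset_right))
  simp [Real.volume_Ioc]

lemma meas_mono' (V : Set ℝ) {x y : ℝ} (hxy : x ≤ y) :
    (volume (V ∩ Ioc 0 x)).toReal ≤ (volume (V ∩ Ioc 0 y)).toReal := by
  apply ENNReal.toReal_mono (meas_ne_top V y)
  exact measure_mono (inter_subset_inter_right _ (Ioc_subset_Ioc_right hxy))

lemma meas_lip (V : Set ℝ) {x y : ℝ} (hxy : x ≤ y) :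
    (volume (V ∩ Ioc 0 y)).toReal ≤ (volume (V ∩ Ioc 0 x)).toReal + (y - x) := by
  have h1 : volume (V ∩ Ioc 0 y) ≤ volume (V ∩ Ioc 0 x) + ENNReal.ofReal (y - x) := by
    calc volume (V ∩ Ioc 0 y) ≤ volume ((V ∩ Ioc 0 x) ∪ Ioc x y) := by
          apply measure_mono
          rintro z ⟨hzV, hz0, hzy⟩
          rcases le_or_gt z x with h | h
          · exact Or.inl ⟨hzV, hz0, h⟩
          · exact Or.inr ⟨h, hzy⟩
      _ ≤ volume (V ∩ Ioc 0 x) + volume (Ioc x y) := measure_union_le _ _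
      _ = volume (V ∩ Ioc 0 x) + ENNReal.ofReal (y - x) := by rw [Real.volume_Ioc]
  calc (volume (V ∩ Ioc 0 y)).toReal
      ≤ (volume (V ∩ Ioc 0 x) + ENNReal.ofReal (y - x)).toReal := by
        apply ENNReal.toReal_mono _ h1
        exact ENNReal.add_ne_top.mpr ⟨meas_ne_top V x, ENNReal.ofReal_ne_top⟩
    _ = (volume (V ∩ Ioc 0 x)).toReal + (y - x) := by
        rw [ENNReal.toReal_add (meas_ne_top V x) ENNReal.ofReal_ne_top,
          ENNReal.toReal_ofReal (by linarith)]

lemma meas_cont (V : Set ℝ) : Continuous (fun x => (volume (V ∩ Ioc 0 x)).toReal) := by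
  have key : ∀ x y : ℝ, (volume (V ∩ Ioc 0 y)).toReal - (volume (V ∩ Ioc 0 x)).toReal
      ≤ dist x y := by
    intro x y
    rcases le_total x y with h | h
    · rw [Real.dist_eq, abs_of_nonpos (by linarith)]
      have := meas_lip V h; linarith
    · have := meas_mono' V h
      have : (0:ℝ) ≤ dist x y := dist_nonneg
      linarith [meas_mono' V h]
  apply LipschitzWith.continuous (K := 1)
  apply LipschitzWith.of_dist_le_mul
  intro x y
  rw [NNReal.coe_one, one_mul, Real.dist_eq, abs_sub_le_iff]
  constructor
  · have := key y x; rw [dist_comm] at this; rw [Real.dist_eq] at this ⊢; linarith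
  · have := key x y; rw [Real.dist_eq] at this ⊢; linarith

lemma meas_add (V : Set ℝ) (hV : MeasurableSet V) {x z : ℝ} (hx : 0 ≤ x) (hxz : x < z)
    (h : Ioc x z ⊆ V) :
    (volume (V ∩ Ioc 0 x)).toReal + (z - x) ≤ (volume (V ∩ Ioc 0 z)).toReal := by
  have hdisj : Disjoint (V ∩ Ioc 0 x) (Ioc x z) := by
    apply Disjoint.mono_left (inter_subset_right)
    rw [Set.disjoint_iff]
    rintro w ⟨⟨_, hw1⟩, hw2, _⟩
    exact absurd (hw1.trans_lt hw2) (lt_irrefl w)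
  have hsub : (V ∩ Ioc 0 x) ∪ Ioc x z ⊆ V ∩ Ioc 0 z := by
    rintro w (⟨hwV, hw0, hwx⟩ | hw)
    · exact ⟨hwV, hw0, hwx.trans hxz.le⟩
    · exact ⟨h hw, hx.trans_lt hw.1, hw.2⟩
  have := measure_mono (μ := volume) hsub
  rw [measure_union hdisj measurableSet_Ioc, Real.volume_Ioc] at this
  have h2 := ENNReal.toReal_mono (meas_ne_top V z) this
  rw [ENNReal.toReal_add (meas_ne_top V x) ENNReal.ofReal_ne_top,
    ENNReal.toReal_ofReal (by linarith)] at h2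
  linarith

lemma key3 (f : ℝ → ℝ) (hc : ContinuousOn f (Set.Icc 0 1))
    (h1 : ∀ᵐ x ∂(volume.restrict (Set.Icc (0:ℝ) 1)), (0 : EReal) ≤ DR f x)
    (h2 : ∀ x ∈ Set.Ico (0:ℝ) 1, (⊥ : EReal) < DR f x)
    {a b : ℝ} (ha : a ∈ Set.Icc (0:ℝ) 1) (hb : b ∈ Set.Icc (0:ℝ) 1) (hab : a ≤ b)
    {ε : ℝ} (hε : 0 < ε) : f a ≤ f b + 3 * ε := by
  -- the exceptional set is null
  have hE : volume ({x | ¬ (0:EReal) ≤ DR f x} ∩ Icc 0 1) = 0 := by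
    have := ae_iff.mp h1
    rwa [Measure.restrict_apply' measurableSet_Icc] at this
  set Ek : ℕ → Set ℝ :=
    fun k => {x | (x ∈ Icc (0:ℝ) 1 ∧ ¬ (0:EReal) ≤ DR f x) ∧ ((-(k:ℝ) : ℝ) : EReal) ≤ DR f x}
    with hEkdef
  have hEk : ∀ k, volume (Ek k) = 0 := by
    intro k
    apply measure_mono_null _ hE
    rintro x ⟨⟨hx1, hx2⟩, _⟩
    exact ⟨hx2, hx1⟩
  -- open covers with small measure
  have hVex : ∀ k : ℕ, ∃ U, U ⊇ Ek k ∧ IsOpen U ∧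
      volume U < ENNReal.ofReal (ε * (1/2)^k / (k+1)) := by
    intro k
    apply Set.exists_isOpen_lt_of_lt
    rw [hEk k]
    exact ENNReal.ofReal_pos.mpr (by positivity)
  choose V hVsub hVopen hVvol using hVex
  have hVfin : ∀ k, volume (V k) ≠ ⊤ := fun k => ((hVvol k).trans_le le_top).ne
  set t : ℕ → ℝ → ℝ := fun k x => ((k:ℝ)+1) * (volume (V k ∩ Ioc 0 x)).toReal with htdef
  have ht_nonneg : ∀ k x, 0 ≤ t k x := fun k x => by positivity
  have ht_mono : ∀ k, ∀ {x y : ℝ}, x ≤ y → t k x ≤ t k y := fun k {x y} h =>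
    mul_le_mul_of_nonneg_left (meas_mono' (V k) h) (by positivity)
  have ht_bound : ∀ k x, t k x ≤ ε * (1/2)^k := by
    intro k x
    have h1 : (volume (V k ∩ Ioc 0 x)).toReal ≤ (volume (V k)).toReal :=
      ENNReal.toReal_mono (hVfin k) (measure_mono inter_subset_left)
    have h2 : (volume (V k)).toReal ≤ ε * (1/2)^k / (k+1) :=
      ENNReal.toReal_le_of_le_ofReal (by positivity) (hVvol k).le
    calc t k x ≤ ((k:ℝ)+1) * (ε * (1/2)^k / (k+1)) :=
          mul_le_mul_of_nonneg_left (h1.trans h2) (by positivity)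
      _ = ε * (1/2)^k := by field_simp
  have hu : Summable (fun k : ℕ => ε * (1/2:ℝ)^k) :=
    (summable_geometric_of_lt_one (by norm_num) (by norm_num)).mul_left ε
  have hts : ∀ x, Summable (fun k => t k x) := fun x =>
    Summable.of_nonneg_of_le (fun k => ht_nonneg k x) (fun k => ht_bound k x) hu
  set g : ℝ → ℝ := fun x => ∑' k, t k x with hgdef
  have hg_mono : ∀ {x y : ℝ}, x ≤ y → g x ≤ g y := fun {x y} h =>
    Summable.tsum_le_tsum (fun k => ht_mono k h) (hts x) (hts y)
  have hg_cont : Continuous g := by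
    apply continuous_tsum (fun k => continuous_const.mul (meas_cont (V k))) hu
    intro k x
    rw [Real.norm_eq_abs]; change |t k x| ≤ _; rw [abs_of_nonneg (ht_nonneg k x)]
    exact ht_bound k x
  have hg_small : g b - g a ≤ 2 * ε := by
    have h1 : 0 ≤ g a := tsum_nonneg (fun k => ht_nonneg k a)
    have h2 : g b ≤ ∑' k : ℕ, ε * (1/2:ℝ)^k :=
      Summable.tsum_le_tsum (fun k => ht_bound k b) (hts b) hu
    have h3 : ∑' k : ℕ, ε * (1/2:ℝ)^k = 2 * ε := by
      rw [tsum_mul_left, tsum_geometric_of_lt_one (by norm_num) (by norm_num)]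
      norm_num; ring
    linarith
  -- the frequently-small-slope condition
  have hf' : ∀ x ∈ Ico a b, ∀ r : ℝ, (0:ℝ) < r →
      ∃ᶠ z in nhdsWithin x (Ioi x), slope (fun y => -f y - g y) x z < r := by
    intro x hx r hr
    have hx01 : x ∈ Ico (0:ℝ) 1 := ⟨ha.1.trans hx.1, hx.2.trans_le hb.2⟩
    have hDR : DR f x =
        limsup (fun z => (((f z - f x)/(z - x) : ℝ) : EReal)) (nhdsWithin x (Ioi x)) := by
      rw [DR, nhdsWithin_Ioc_eq_nhdsGT hx01.2]
    by_cases h0 : (0:EReal) ≤ DR f x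
    · have hlt : ((-r : ℝ) : EReal) <
          limsup (fun z => (((f z - f x)/(z - x) : ℝ) : EReal)) (nhdsWithin x (Ioi x)) := by
        rw [← hDR]
        refine lt_of_lt_of_le ?_ h0
        exact_mod_cast (by linarith : -r < (0:ℝ))
      have hfreq := frequently_lt_of_lt_limsup (by isBoundedDefault) hlt
      refine (hfreq.and_eventually self_mem_nhdsWithin).mono ?_
      rintro z ⟨hslope, hz⟩
      rw [EReal.coe_lt_coe_iff] at hslope
      have hzx : (0:ℝ) < z - x := sub_pos.mpr hz
      rw [slope_def_field]
      have hg0 : g x ≤ g z := hg_mono (le_of_lt hz)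
      rw [div_lt_iff₀ hzx]
      rw [lt_div_iff₀ hzx] at hslope
      nlinarith
    · obtain ⟨k, hk⟩ : ∃ k : ℕ, ((-(k:ℝ) : ℝ) : EReal) ≤ DR f x := by
        obtain ⟨q, _, hq2⟩ := EReal.exists_between_coe_real (h2 x hx01)
        obtain ⟨k, hk⟩ := exists_nat_ge (-q)
        refine ⟨k, le_trans ?_ hq2.le⟩
        exact EReal.coe_le_coe_iff.mpr (by linarith)
      have hxV : x ∈ V k := hVsub k ⟨⟨⟨hx01.1, hx01.2.le⟩, h0⟩, hk⟩
      obtain ⟨δ, hδ, hball⟩ := Metric.isOpen_iff.mp (hVopen k) x hxV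
      have hev : ∀ᶠ z in nhdsWithin x (Ioi x), z ∈ Ioo x (x + δ) :=
        Ioo_mem_nhdsGT_of_mem ⟨le_refl x, by linarith⟩
      have hfreq : ∃ᶠ z in nhdsWithin x (Ioi x),
          ((-((k:ℝ)+1) : ℝ) : EReal) < (((f z - f x)/(z - x) : ℝ) : EReal) := by
        apply frequently_lt_of_lt_limsup (by isBoundedDefault)
        rw [← hDR]
        refine lt_of_lt_of_le ?_ hk
        exact_mod_cast (by linarith : -((k:ℝ)+1) < -(k:ℝ))
      refine (hfreq.and_eventually hev).mono ?_
      rintro z ⟨hslope, hz1, hz2⟩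
      rw [EReal.coe_lt_coe_iff] at hslope
      have hzx : (0:ℝ) < z - x := sub_pos.mpr hz1
      -- Ioc x z ⊆ V k
      have hIoc : Ioc x z ⊆ V k := by
        intro w hw
        apply hball
        rw [Metric.mem_ball, Real.dist_eq, abs_of_pos (sub_pos.mpr hw.1)]
        linarith [hw.2]
      have hmk := meas_add (V k) (hVopen k).measurableSet hx01.1 hz1 hIoc
      have htk : t k x + ((k:ℝ)+1) * (z - x) ≤ t k z := by
        have := mul_le_mul_of_nonneg_left hmk (by positivity : (0:ℝ) ≤ (k:ℝ)+1)
        rw [htdef]; dsimp only; nlinarith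
      -- g z - g x ≥ t k z - t k x
      have hgz : g x + (t k z - t k x) ≤ g z := by
        have hsx : Summable (fun j => if j = k then 0 else t j x) := by
          apply Summable.of_nonneg_of_le _ _ (hts x)
          · intro j; by_cases h : j = k <;> simp [h, ht_nonneg]
          · intro j; by_cases h : j = k <;> simp [h, ht_nonneg]
        have hsz : Summable (fun j => if j = k then 0 else t j z) := by
          apply Summable.of_nonneg_of_le _ _ (hts z)
          · intro j; by_cases h : j = k <;> simp [h, ht_nonneg]
          · intro j; by_cases h : j = k <;> simp [h, ht_nonneg]
        have ex : g x = t k x + ∑' j, if j = k then 0 else t j x :=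
          Summable.tsum_eq_add_tsum_ite (hts x) k
        have ez : g z = t k z + ∑' j, if j = k then 0 else t j z :=
          Summable.tsum_eq_add_tsum_ite (hts z) k
        have hrest : (∑' j, if j = k then 0 else t j x) ≤
            ∑' j, if j = k then 0 else t j z := by
          apply Summable.tsum_le_tsum _ hsx hsz
          intro j; by_cases h : j = k <;> simp [h, ht_mono j hz1.le]
        rw [ex, ez]; linarith
      rw [slope_def_field, div_lt_iff₀ hzx]
      rw [lt_div_iff₀ hzx] at hslope
      nlinarith
  -- apply the fencing theorem
  have hFcont : ContinuousOn (fun y => -f y - g y) (Icc a b) :=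
    ((hc.mono (Icc_subset_Icc ha.1 hb.2)).neg).sub hg_cont.continuousOn
  have hB : ∀ x : ℝ, HasDerivAt (fun y => (-f a - g a) + ε * (y - a)) ε x := by
    intro x
    simpa using (((hasDerivAt_id x).sub_const a).const_mul ε).const_add (-f a - g a)
  have hfence := image_le_of_liminf_slope_right_lt_deriv_boundary
    (f := fun y => -f y - g y) (f' := fun _ => (0:ℝ)) (a := a) (b := b)
    hFcont hf'
    (B := fun y => (-f a - g a) + ε * (y - a)) (B' := fun _ => ε)
    (by simp) hB (fun x _ _ => hε)
  have hcb := hfence (right_mem_Icc.mpr hab)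
  have hba : ε * (b - a) ≤ ε := by nlinarith [ha.1, hb.2]
  have hga : g a ≤ g b := hg_mono hab
  linarith


/-- If `f` is continuous on `[0,1]`, `D⁺f(x) ≥ 0` for a.e. `x`, and `D⁺f(x) > -∞` for every
`x ∈ [0,1)`, then `f` is non-decreasing on `[0,1]`. -/
theorem stmt3 (f : ℝ → ℝ) (hc : ContinuousOn f (Set.Icc 0 1))
    (h1 : ∀ᵐ x ∂(volume.restrict (Set.Icc (0:ℝ) 1)), (0 : EReal) ≤ DR f x)
    (h2 : ∀ x ∈ Set.Ico (0:ℝ) 1, (⊥ : EReal) < DR f x) :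
    MonotoneOn f (Set.Icc 0 1) := by
  intro a ha b hb hab
  refine le_of_forall_pos_le_add ?_
  intro η hη
  have := key3 f hc h1 h2 ha hb hab (ε := η/3) (by linarith)
  linarith
end

section
/- If f : [0,1] → ℝ is continuous and has a knot point at almost every x ∈ [0,1] (i.e., D⁺f(x) = D⁻f(x) = +∞ and D₊f(x) = D₋f(x) = −∞ a.e.), then there exists a point x₀ ∈ [0,1) with D⁺f(x₀) = −∞. -/
open MeasureTheory Filter Set

/-- Given a Lebesgue-null set `N`, there is a bounded continuous monotone function whose
right derivative is `+∞` at every point of `N ∩ [0,∞)`. -/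
lemma exists_phi (N : Set ℝ) (hN : volume N = 0) :
    ∃ φ : ℝ → ℝ, Continuous φ ∧ Monotone φ ∧
      (∀ x ∈ N, 0 ≤ x → ∀ K : ℕ, ∃ η > 0, ∀ t, x < t → t < x + η →
        (K : ℝ) * (t - x) ≤ φ t - φ x) := by
  have hopen : ∀ k : ℕ, ∃ U, U ⊇ N ∧ IsOpen U ∧ volume U < ENNReal.ofReal ((1/2 : ℝ) ^ k) := by
    intro k
    refine Set.exists_isOpen_lt_of_lt N _ ?_
    rw [hN]
    exact ENNReal.ofReal_pos.mpr (by positivity)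
  choose G hG1 hG2 hG3 using hopen
  set ψ : ℕ → ℝ → ℝ := fun k x => (volume (G k ∩ Set.Ioc 0 x)).toReal with hψ
  have hfin : ∀ k (s : Set ℝ), volume (G k ∩ s) ≠ ⊤ := by
    intro k s
    exact ne_top_of_lt (lt_of_le_of_lt (measure_mono inter_subset_left)
      (lt_of_lt_of_le (hG3 k) le_top))
  have hnonneg : ∀ k x, 0 ≤ ψ k x := fun k x => ENNReal.toReal_nonneg
  have hbound : ∀ k x, ψ k x ≤ (1/2 : ℝ) ^ k := by
    intro k x
    refine ENNReal.toReal_le_of_le_ofReal (by positivity) ?_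
    exact le_of_lt (lt_of_le_of_lt (measure_mono inter_subset_left) (hG3 k))
  have hmonoψ : ∀ k, Monotone (ψ k) := by
    intro k x y hxy
    exact ENNReal.toReal_mono (hfin k _)
      (measure_mono (inter_subset_inter_right _ (Set.Ioc_subset_Ioc_right hxy)))
  have hgeom : Summable (fun k : ℕ => (1/2 : ℝ) ^ k) :=
    summable_geometric_of_lt_one (by norm_num) (by norm_num)
  have hsummable : ∀ x, Summable fun k => ψ k x := fun x =>
    Summable.of_nonneg_of_le (fun k => hnonneg k x) (fun k => hbound k x) hgeom
  have hlipaux : ∀ k x y, x ≤ y → ψ k y ≤ ψ k x + (y - x) := by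
    intro k x y hxy
    have hsub : Set.Ioc 0 y ⊆ Set.Ioc 0 x ∪ Set.Ioc x y := by
      intro s hs
      rcases le_or_gt s x with h | h
      · exact Or.inl ⟨hs.1, h⟩
      · exact Or.inr ⟨h, hs.2⟩
    have h1 : volume (G k ∩ Set.Ioc 0 y) ≤ volume (G k ∩ Set.Ioc 0 x) + volume (Set.Ioc x y) := by
      calc volume (G k ∩ Set.Ioc 0 y)
          ≤ volume ((G k ∩ Set.Ioc 0 x) ∪ (G k ∩ Set.Ioc x y)) := by
            refine measure_mono ?_
            rw [← Set.inter_union_distrib_left]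
            exact Set.inter_subset_inter_right _ hsub
        _ ≤ volume (G k ∩ Set.Ioc 0 x) + volume (G k ∩ Set.Ioc x y) := measure_union_le _ _
        _ ≤ _ := by gcongr; exact inter_subset_right
    have h2 : ((volume (G k ∩ Set.Ioc 0 x) + volume (Set.Ioc x y))).toReal
        = ψ k x + (y - x) := by
      rw [ENNReal.toReal_add (hfin k _) (by simp [Real.volume_Ioc]), Real.volume_Ioc,
        ENNReal.toReal_ofReal (by linarith)]
    calc ψ k y ≤ _ := ENNReal.toReal_mono (by
            rw [← lt_top_iff_ne_top]
            refine ENNReal.add_lt_top.mpr ⟨?_, ?_⟩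
            · exact lt_top_iff_ne_top.mpr (hfin k _)
            · simp [Real.volume_Ioc]) h1
      _ = ψ k x + (y - x) := h2
  have hcont : ∀ k, Continuous (ψ k) := by
    intro k
    rw [Metric.continuous_iff]
    intro x ε hε
    refine ⟨ε, hε, fun y hy => ?_⟩
    rw [Real.dist_eq] at hy ⊢
    rcases le_total x y with h | h
    · have := hlipaux k x y h
      have h0 := hmonoψ k h
      rw [abs_of_nonneg (by linarith)]
      rw [abs_of_nonneg (by linarith)] at hy
      linarith
    · have := hlipaux k y x h
      have h0 := hmonoψ k h
      rw [abs_of_nonpos (by linarith)]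
      rw [abs_of_nonpos (by linarith)] at hy
      linarith
  refine ⟨fun x => ∑' k, ψ k x, ?_, ?_, ?_⟩
  · exact continuous_tsum hcont hgeom (fun k x => by
      rw [Real.norm_eq_abs, abs_of_nonneg (hnonneg k x)]; exact hbound k x)
  · exact fun x y hxy => Summable.tsum_le_tsum (fun k => hmonoψ k hxy) (hsummable x) (hsummable y)
  · intro x hxN hx0 K
    set O : Set ℝ := ⋂ k ∈ Finset.range K, G k with hO
    have hOopen : IsOpen O := isOpen_biInter_finset (fun k _ => hG2 k)
    have hxO : x ∈ O := Set.mem_iInter₂.mpr fun k _ => hG1 k hxN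
    obtain ⟨η, hη, hball⟩ := Metric.isOpen_iff.mp hOopen x hxO
    refine ⟨η, hη, fun t hxt htη => ?_⟩
    have hsub : ∀ k ∈ Finset.range K, Set.Ioc x t ⊆ G k := by
      intro k hk s hs
      have : s ∈ O := hball (by
        rw [Metric.mem_ball, Real.dist_eq, abs_of_pos (by linarith [hs.1])]
        linarith [hs.2])
      exact Set.mem_iInter₂.mp this k hk
    have hterm : ∀ k ∈ Finset.range K, ψ k t - ψ k x = t - x := by
      intro k hk
      have hsplit : Set.Ioc 0 t = Set.Ioc 0 x ∪ Set.Ioc x t :=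
        (Set.Ioc_union_Ioc_eq_Ioc hx0 hxt.le).symm
      have : volume (G k ∩ Set.Ioc 0 t)
          = volume (G k ∩ Set.Ioc 0 x) + volume (G k ∩ Set.Ioc x t) := by
        rw [hsplit, Set.inter_union_distrib_left]
        refine measure_union ?_ (((hG2 k).measurableSet).inter measurableSet_Ioc)
        exact (Set.Ioc_disjoint_Ioc_of_le le_rfl).mono inter_subset_right inter_subset_right
      have h2 : G k ∩ Set.Ioc x t = Set.Ioc x t :=
        Set.inter_eq_self_of_subset_right (hsub k hk)
      have : ψ k t = ψ k x + (t - x) := by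
        rw [hψ]
        simp only
        rw [this, ENNReal.toReal_add (hfin k _) (hfin k _), h2, Real.volume_Ioc,
          ENNReal.toReal_ofReal (by linarith)]
      linarith
    have hsum : ∀ y, (∑' k, ψ k y) - (∑' k, ψ k x) = ∑' k, (ψ k y - ψ k x) := by
      intro y
      rw [Summable.tsum_sub (hsummable y) (hsummable x)]
    rw [hsum t]
    calc (K : ℝ) * (t - x) = ∑ k ∈ Finset.range K, (ψ k t - ψ k x) := by
          rw [Finset.sum_congr rfl hterm, Finset.sum_const, Finset.card_range, nsmul_eq_mul]
      _ ≤ ∑' k, (ψ k t - ψ k x) := by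
          refine Summable.sum_le_tsum _ (fun k _ => sub_nonneg.mpr (hmonoψ k hxt.le)) ?_
          exact (hsummable t).sub (hsummable x)

/-- If a continuous `f : [0,1] → ℝ` has a knot point at almost every point, then there is a
point `x₀ ∈ [0,1)` with `D⁺f(x₀) = -∞`. -/
theorem stmt5 (f : ℝ → ℝ) (hc : ContinuousOn f (Set.Icc 0 1))
    (hknot : ∀ᵐ x ∂(volume.restrict (Set.Icc (0:ℝ) 1)),
      DR f x = ⊤ ∧ DL f x = ⊤ ∧ Dr f x = ⊥ ∧ Dl f x = ⊥) :
    ∃ x₀ ∈ Set.Ico (0:ℝ) 1, DR f x₀ = ⊥ := by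
  classical
  set P : ℝ → Prop := fun x => DR f x = ⊤ ∧ DL f x = ⊤ ∧ Dr f x = ⊥ ∧ Dl f x = ⊥ with hP
  by_cases hmono : MonotoneOn f (Set.Icc 0 1)
  · -- monotone case: contradiction with a.e. knot
    exfalso
    have hμ : (volume.restrict (Set.Icc (0:ℝ) 1)) ≠ 0 := by
      intro h
      have : (volume.restrict (Set.Icc (0:ℝ) 1)) Set.univ = 0 := by rw [h]; simp
      rw [Measure.restrict_apply' measurableSet_Icc, Set.univ_inter, Real.volume_Icc] at this
      simp at this
    have : (ae (volume.restrict (Set.Icc (0:ℝ) 1))).NeBot := ae_neBot.mpr hμ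
    have hae1 : ∀ᵐ x ∂(volume.restrict (Set.Icc (0:ℝ) 1)), x ∈ Set.Ico (0:ℝ) 1 := by
      rw [ae_iff]
      rw [Measure.restrict_apply' measurableSet_Icc]
      refine measure_mono_null (fun x hx => ?_) (measure_singleton (1:ℝ))
      simp only [Set.mem_setOf_eq, Set.mem_Ico, Set.mem_inter_iff, Set.mem_Icc] at hx ⊢
      have h1 := hx.1
      push_neg at h1
      have := h1 hx.2.1
      simp [le_antisymm hx.2.2 this]
    obtain ⟨x, hxP, hxI⟩ := (hknot.and hae1).exists
    have hDr : Dr f x = ⊥ := hxP.2.2.1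
    have h0 : (0 : EReal) ≤ Dr f x := by
      refine Filter.le_liminf_of_le (by isBoundedDefault) ?_
      filter_upwards [eventually_mem_nhdsWithin] with t ht
      have hfx : f x ≤ f t := hmono ⟨hxI.1, hxI.2.le⟩ ⟨le_trans hxI.1 ht.1.le, ht.2⟩ ht.1.le
      have : (0:ℝ) ≤ (f t - f x) / (t - x) :=
        div_nonneg (by linarith) (by linarith [ht.1])
      exact_mod_cast this
    rw [hDr] at h0
    simp at h0
  · -- non-monotone case
    -- the null set of non-knot points
    set N : Set ℝ := {x | ¬ P x} ∩ Set.Icc 0 1 with hNdef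
    have hNnull : volume N = 0 := by
      have := ae_iff.mp hknot
      rwa [Measure.restrict_apply' measurableSet_Icc] at this
    obtain ⟨φ, hφc, hφm, hφkey⟩ := exists_phi N hNnull
    -- get a descent pair
    rw [MonotoneOn] at hmono
    push_neg at hmono
    obtain ⟨a, ha, b, hb, hab, hfab⟩ := hmono
    have hab' : a < b := lt_of_le_of_ne hab (by rintro rfl; exact absurd rfl hfab.ne)
    set C : ℝ := φ 1 - φ 0 + 1 with hC
    have hC1 : 1 ≤ C := by
      have := hφm (show (0:ℝ) ≤ 1 by norm_num)
      simp only [hC]; linarith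
    have hCpos : 0 < C := by linarith
    set δ : ℝ := (f a - f b) / (2 * C) with hδdef
    have hδ : 0 < δ := div_pos (by linarith) (by linarith)
    set F : ℝ → ℝ := fun x => f x + δ * φ x with hF
    have hFab : F b < F a := by
      have h1 : φ b - φ a ≤ C := by
        have h2 := hφm (show (0:ℝ) ≤ a from ha.1)
        have h3 := hφm (show b ≤ 1 from hb.2)
        simp only [hC]; linarith
      have h4 : δ * (φ b - φ a) ≤ δ * C := by
        rcases le_or_gt 0 (φ b - φ a) with h | h
        · exact mul_le_mul_of_nonneg_left h1 hδ.le
        · nlinarith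
      have h5 : δ * C = (f a - f b) / 2 := by
        rw [hδdef]; field_simp
      simp only [hF]
      nlinarith
    set L : ℝ := (F a + F b) / 2 with hL
    have hLa : L < F a := by clear_value L F δ C; simp only [hL]; linarith
    have hLb : F b < L := by clear_value L F δ C; simp only [hL]; linarith
    have hFcont : ContinuousOn F (Set.Icc a b) := by
      refine ContinuousOn.add (hc.mono (Set.Icc_subset_Icc ha.1 hb.2)) ?_
      exact (continuous_const.mul hφc).continuousOn
    set S : Set ℝ := Set.Icc a b ∩ F ⁻¹' (Set.Ici L) with hS
    have hSclosed : IsClosed S :=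
      hFcont.preimage_isClosed_of_isClosed isClosed_Icc isClosed_Ici
    have hScpt : IsCompact S :=
      IsCompact.of_isClosed_subset isCompact_Icc hSclosed Set.inter_subset_left
    have hSne : S.Nonempty := ⟨a, ⟨le_refl a, hab⟩, hLa.le⟩
    set x₀ : ℝ := sSup S with hx₀def
    have hx₀S : x₀ ∈ S := hScpt.sSup_mem hSne
    have hx₀ab : x₀ ∈ Set.Icc a b := hx₀S.1
    have hx₀L : L ≤ F x₀ := hx₀S.2
    have hx₀b : x₀ < b := by
      rcases lt_or_eq_of_le hx₀ab.2 with h | h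
      · exact h
      · exfalso; rw [h] at hx₀L; linarith
    have hafter : ∀ t, x₀ < t → t ≤ b → F t < L := by
      intro t ht htb
      by_contra hFt
      push_neg at hFt
      have htS : t ∈ S := ⟨⟨le_trans hx₀ab.1 ht.le, htb⟩, hFt⟩
      have : t ≤ x₀ := le_csSup hScpt.bddAbove htS
      linarith
    have hslope : ∀ t, x₀ < t → t ≤ b → f t - f x₀ ≤ -(δ * (φ t - φ x₀)) := by
      intro t ht htb
      have := hafter t ht htb
      have : F t < F x₀ := lt_of_lt_of_le this hx₀L
      simp only [hF] at this
      linarith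
    have hx₀Icc : x₀ ∈ Set.Icc (0:ℝ) 1 :=
      ⟨le_trans ha.1 hx₀ab.1, le_trans hx₀ab.2 hb.2⟩
    have hx₀Ico : x₀ ∈ Set.Ico (0:ℝ) 1 := ⟨hx₀Icc.1, lt_of_lt_of_le hx₀b hb.2⟩
    -- eventually in the right filter, t is in (x₀, b]
    have hev : ∀ᶠ t in nhdsWithin x₀ (Set.Ioc x₀ 1), x₀ < t ∧ t ≤ b := by
      have h1 : ∀ᶠ t in nhdsWithin x₀ (Set.Ioc x₀ 1), t < b :=
        Filter.Eventually.filter_mono nhdsWithin_le_nhds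
          (Filter.Tendsto.eventually_lt_const hx₀b Filter.tendsto_id)
      filter_upwards [eventually_mem_nhdsWithin, h1] with t ht htb
      exact ⟨ht.1, htb.le⟩
    by_cases hx₀N : x₀ ∈ N
    · -- x₀ is a non-knot point in the null set: DR f x₀ = ⊥
      refine ⟨x₀, hx₀Ico, ?_⟩
      have hK : ∀ K : ℕ, DR f x₀ ≤ ((-(δ * K) : ℝ) : EReal) := by
        intro K
        obtain ⟨η, hη, hφK⟩ := hφkey x₀ hx₀N hx₀Icc.1 K
        have hev2 : ∀ᶠ t in nhdsWithin x₀ (Set.Ioc x₀ 1), t < x₀ + η :=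
          Filter.Eventually.filter_mono nhdsWithin_le_nhds
            (Filter.Tendsto.eventually_lt_const (by linarith) Filter.tendsto_id)
        refine Filter.limsup_le_of_le (by isBoundedDefault) ?_
        filter_upwards [hev, hev2] with t ht htη
        have h1 := hslope t ht.1 ht.2
        have h2 := hφK t ht.1 htη
        have h3 : 0 < t - x₀ := by linarith [ht.1]
        have h4 : f t - f x₀ ≤ -(δ * K) * (t - x₀) := by nlinarith
        have h5 : (f t - f x₀) / (t - x₀) ≤ -(δ * K) := by
          rw [div_le_iff₀ h3]; exact h4
        exact_mod_cast h5
      by_contra hne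
      have hbot : (⊥ : EReal) < DR f x₀ := bot_lt_iff_ne_bot.mpr hne
      obtain ⟨r, _, hr2⟩ := EReal.lt_iff_exists_real_btwn.mp hbot
      obtain ⟨K, hKgt⟩ := exists_nat_gt ((-r) / δ)
      have h6 : -r < K * δ := (div_lt_iff₀ hδ).mp hKgt
      have h7 : (r : EReal) ≤ ((-(δ * K) : ℝ) : EReal) := le_trans hr2.le (hK K)
      rw [EReal.coe_le_coe_iff] at h7
      nlinarith
    · -- x₀ is a knot point: contradiction because DR f x₀ = ⊤ but slopes are ≤ 0
      exfalso
      have hknot₀ : P x₀ := by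
        by_contra h
        exact hx₀N ⟨h, hx₀Icc⟩
      have hDRtop : DR f x₀ = ⊤ := hknot₀.1
      have hle : DR f x₀ ≤ ((0:ℝ) : EReal) := by
        refine Filter.limsup_le_of_le (by isBoundedDefault) ?_
        filter_upwards [hev] with t ht
        have h1 := hslope t ht.1 ht.2
        have h2 : φ x₀ ≤ φ t := hφm ht.1.le
        have h3 : 0 < t - x₀ := by linarith [ht.1]
        have h4 : (f t - f x₀) / (t - x₀) ≤ 0 := by
          apply div_nonpos_of_nonpos_of_nonneg _ h3.le
          nlinarith
        exact_mod_cast h4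
      rw [hDRtop] at hle
      simp at hle
end

section
/- A continuous function f : [0,1] → ℝ that has a knot point at Lebesgue-almost every point of [0,1] is not a Besicovitch function. -/
open MeasureTheory Filter Set

open scoped Topology ENNReal

namespace S6

noncomputable def clamp (c x : ℝ) : ℝ := max c (min x 1)

noncomputable def RF (f : ℝ → ℝ) (c : ℝ) : ℝ → ℝ := fun x => sSup (f '' Icc c (clamp c x))

variable {f : ℝ → ℝ} {c : ℝ}

lemma clamp_mem (hc1 : c ≤ 1) (x : ℝ) : clamp c x ∈ Icc c 1 := by
  constructor
  · exact le_max_left _ _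
  · exact max_le hc1 (min_le_right _ _)

lemma clamp_eq_self (hx : x ∈ Icc c 1) : clamp c x = x := by
  rcases hx with ⟨h1, h2⟩
  rw [clamp, min_eq_left h2, max_eq_right h1]

lemma clamp_mono (c : ℝ) : Monotone (clamp c) := fun a b hab =>
  max_le_max le_rfl (min_le_min hab le_rfl)

lemma image_nonempty {a b : ℝ} (hab : a ≤ b) : (f '' Icc a b).Nonempty :=
  (nonempty_Icc.2 hab).image f

lemma image_bddAbove (hc : ContinuousOn f (Icc 0 1)) (h0 : 0 ≤ a) (h1 : b ≤ 1) :
    BddAbove (f '' Icc a b) :=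
  isCompact_Icc.bddAbove_image (hc.mono (Icc_subset_Icc h0 h1))

lemma RF_eval (hx : x ∈ Icc c 1) : RF f c x = sSup (f '' Icc c x) := by
  rw [RF, clamp_eq_self hx]

lemma RF_mono (hc : ContinuousOn f (Icc 0 1)) (h0c : 0 ≤ c) (hc1 : c ≤ 1) :
    Monotone (RF f c) := by
  intro a b hab
  apply csSup_le_csSup (image_bddAbove hc h0c (clamp_mem hc1 b).2)
    (image_nonempty (clamp_mem hc1 a).1)
  exact image_mono (Icc_subset_Icc le_rfl (clamp_mono c hab))

lemma le_RF (hc : ContinuousOn f (Icc 0 1)) (h0c : 0 ≤ c) (hx : x ∈ Icc c 1) :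
    f x ≤ RF f c x := by
  rw [RF_eval hx]
  exact le_csSup (image_bddAbove hc h0c hx.2) ⟨x, ⟨hx.1, le_rfl⟩, rfl⟩

lemma RF_c (hc1 : c ≤ 1) : RF f c c = f c := by
  rw [RF_eval ⟨le_rfl, hc1⟩, Icc_self, image_singleton, csSup_singleton]

lemma RF_split (hc : ContinuousOn f (Icc 0 1)) (h0c : 0 ≤ c) (hcu : c ≤ u) (huv : u ≤ v)
    (hv1 : v ≤ 1) : sSup (f '' Icc c v) = sSup (f '' Icc c u) ⊔ sSup (f '' Icc u v) := by
  rw [← Icc_union_Icc_eq_Icc hcu huv, image_union]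
  exact csSup_union (image_bddAbove hc h0c (huv.trans hv1)) (image_nonempty hcu)
    (image_bddAbove hc (h0c.trans hcu) hv1) (image_nonempty huv)

lemma RF_cont (hc : ContinuousOn f (Icc 0 1)) (h0c : 0 ≤ c) (hc1 : c ≤ 1) :
    Continuous (RF f c) := by
  have hg : ContinuousOn (fun t => sSup (f '' Icc c t)) (Icc c 1) := by
    rw [Metric.continuousOn_iff]
    intro b hb ε hε
    have huc : UniformContinuousOn f (Icc 0 1) :=
      isCompact_Icc.uniformContinuousOn_of_continuous hc
    rw [Metric.uniformContinuousOn_iff] at huc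
    obtain ⟨δ, hδ, hδ'⟩ := huc (ε / 2) (by linarith)
    refine ⟨δ, hδ, fun a ha hab => ?_⟩
    have key : ∀ u v : ℝ, u ∈ Icc c 1 → v ∈ Icc c 1 → u ≤ v → v - u < δ →
        sSup (f '' Icc c u) ≤ sSup (f '' Icc c v) ∧
        sSup (f '' Icc c v) ≤ sSup (f '' Icc c u) + ε / 2 := by
      intro u v hu hv huv hd
      constructor
      · exact csSup_le_csSup (image_bddAbove hc h0c hv.2) (image_nonempty hu.1)
          (image_mono (Icc_subset_Icc le_rfl huv))
      · rw [RF_split hc h0c hu.1 huv hv.2]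
        have h2 : sSup (f '' Icc u v) ≤ sSup (f '' Icc c u) + ε / 2 := by
          apply csSup_le (image_nonempty huv)
          rintro y ⟨z, hz, rfl⟩
          have hzu : dist z u < δ := by
            rw [Real.dist_eq, abs_of_nonneg (by linarith [hz.1])]
            linarith [hz.2]
          have hz01 : z ∈ Icc (0:ℝ) 1 := ⟨h0c.trans (hu.1.trans hz.1), hz.2.trans hv.2⟩
          have hu01 : u ∈ Icc (0:ℝ) 1 := ⟨h0c.trans hu.1, hu.2⟩
          have := hδ' z hz01 u hu01 hzu
          rw [Real.dist_eq] at this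
          have hfu : f u ≤ sSup (f '' Icc c u) :=
            le_csSup (image_bddAbove hc h0c hu.2) ⟨u, ⟨hu.1, le_rfl⟩, rfl⟩
          have : f z - f u < ε / 2 := (le_abs_self _).trans_lt this
          linarith
        have h1 : sSup (f '' Icc c u) ≤ sSup (f '' Icc c u) + ε / 2 := by linarith
        exact sup_le h1 h2
    rcases le_total a b with h | h
    · have hd : b - a < δ := by
        rw [Real.dist_eq, abs_of_nonpos (by linarith)] at hab; linarith
      obtain ⟨h1, h2⟩ := key a b ha hb h hd
      rw [Real.dist_eq, abs_of_nonpos (by linarith)]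
      linarith
    · have hd : a - b < δ := by
        rw [Real.dist_eq, abs_of_nonneg (by linarith)] at hab; linarith
      obtain ⟨h1, h2⟩ := key b a hb ha h hd
      rw [Real.dist_eq, abs_of_nonneg (by linarith)]
      linarith
  have : Continuous (fun x => max c (min x 1)) :=
    (continuous_const.max (continuous_id.min continuous_const))
  exact hg.comp_continuous this (fun x => clamp_mem hc1 x)


/-- The contact set of the running maximum. -/
def KS (f : ℝ → ℝ) (c : ℝ) : Set ℝ := {x | x ∈ Icc c 1 ∧ f x = RF f c x}

lemma KS_closed (hc : ContinuousOn f (Icc 0 1)) (h0c : 0 ≤ c) (hc1 : c ≤ 1) :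
    IsClosed (KS f c) := by
  have h1 : ContinuousOn (fun x => f x - RF f c x) (Icc c 1) :=
    (hc.mono (Icc_subset_Icc h0c le_rfl)).sub (RF_cont hc h0c hc1).continuousOn
  have := h1.preimage_isClosed_of_isClosed isClosed_Icc isClosed_singleton (t := {(0:ℝ)})
  convert this using 1
  ext x
  simp only [KS, mem_setOf_eq, mem_inter_iff, mem_preimage, mem_singleton_iff, sub_eq_zero]

lemma RF_const (hc : ContinuousOn f (Icc 0 1)) (h0c : 0 ≤ c) {a b : ℝ}
    (ha : a ∈ Icc c 1) (hb : b ∈ Icc c 1) (hab : a ≤ b)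
    (hdisj : Icc a b ∩ KS f c = ∅) : RF f c b = RF f c a := by
  refine le_antisymm ?_ (RF_mono hc h0c (le_trans ha.1 (le_trans hab hb.2)) hab)
  rw [RF_eval hb, RF_split hc h0c ha.1 hab hb.2, ← RF_eval ha]
  refine sup_le le_rfl ?_
  obtain ⟨z, hz, hzmax⟩ := isCompact_Icc.exists_isMaxOn (nonempty_Icc.2 hab)
    (hc.mono (Icc_subset_Icc (h0c.trans ha.1) hb.2))
  have hsup : sSup (f '' Icc a b) = f z := by
    apply le_antisymm
    · exact csSup_le (image_nonempty hab) (by rintro y ⟨w, hw, rfl⟩; exact hzmax hw)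
    · exact le_csSup (image_bddAbove hc (h0c.trans ha.1) hb.2) ⟨z, hz, rfl⟩
  rw [hsup]
  by_contra hlt
  push_neg at hlt
  -- then z is a contact point
  have hz1 : z ∈ Icc c 1 := ⟨ha.1.trans hz.1, hz.2.trans hb.2⟩
  have hRFz : RF f c z = f z := by
    rw [RF_eval hz1, RF_split hc h0c ha.1 hz.1 hz1.2, ← RF_eval ha]
    have h2 : sSup (f '' Icc a z) = f z := by
      apply le_antisymm
      · exact csSup_le (image_nonempty hz.1)
          (by rintro y ⟨w, hw, rfl⟩; exact hzmax ⟨hw.1, hw.2.trans hz.2⟩)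
      · exact le_csSup (image_bddAbove hc (h0c.trans ha.1) hz1.2) ⟨z, ⟨hz.1, le_rfl⟩, rfl⟩
    rw [h2]
    exact sup_eq_right.mpr hlt.le
  have : z ∈ Icc a b ∩ KS f c := ⟨hz, hz1, hRFz.symm⟩
  rw [hdisj] at this
  exact this


theorem key (hc : ContinuousOn f (Icc 0 1)) (h0c : 0 ≤ c) (hc1 : c < 1)
    (hne : ∃ z ∈ Icc c 1, f c < f z)
    (hnull : volume (KS f c \ {c}) = 0) :
    ∃ x ∈ Ioc c 1, Tendsto (fun y => (((f y - f x) / (y - x) : ℝ) : EReal))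
      (𝓝[Ico 0 x] x) (𝓝 ⊤) := by
  set F := RF f c with hF
  have hFm : Monotone F := RF_mono hc h0c hc1.le
  have hFcont : Continuous F := RF_cont hc h0c hc1.le
  -- tail behaviour
  have hclampbot : ∀ x : ℝ, x ≤ c → F x = f c := by
    intro x hx
    have h1 : clamp c x = c := by
      rw [clamp, min_eq_left (hx.trans hc1.le), max_eq_left hx]
    rw [hF, RF, h1, Icc_self, image_singleton, csSup_singleton]
  have hclamptop : ∀ x : ℝ, 1 ≤ x → F x = F 1 := by
    intro x hx
    have h1 : clamp c x = 1 := by rw [clamp, min_eq_right hx, max_eq_right hc1.le]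
    have h2 : clamp c 1 = 1 := by rw [clamp, min_self, max_eq_right hc1.le]
    rw [hF, RF, h1, RF, h2]
  have hbot : Tendsto F atBot (𝓝 (f c)) := by
    apply Tendsto.congr' _ (tendsto_const_nhds (α := ℝ))
    filter_upwards [Iic_mem_atBot c] with x hx
    exact (hclampbot x hx).symm
  have htop : Tendsto F atTop (𝓝 (F 1)) := by
    apply Tendsto.congr' _ (tendsto_const_nhds (α := ℝ))
    filter_upwards [Ici_mem_atTop (1:ℝ)] with x hx
    exact (hclamptop x hx).symm
  have hfc_le : ∀ x, f c ≤ F x := by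
    intro x
    rcases le_total x c with h | h
    · rw [hclampbot x h]
    · rw [← hclampbot c le_rfl]; exact hFm h
  have hFle1 : ∀ x, F x ≤ F 1 := by
    intro x
    rcases le_total x 1 with h | h
    · exact hFm h
    · rw [hclamptop x h]
  -- the Stieltjes measure
  set StF : StieltjesFunction ℝ := ⟨F, hFm, fun x => hFcont.continuousWithinAt⟩ with hStF
  set ρ := StF.measure with hρdef
  have hleft : ∀ x, Function.leftLim F x = F x := fun x =>
    leftLim_eq_of_tendsto
      ((hFcont.tendsto x).mono_left nhdsWithin_le_nhds)
  have hsingleton : ∀ x, ρ {x} = 0 := by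
    intro x
    rw [hρdef, StieltjesFunction.measure_singleton]
    show ENNReal.ofReal (F x - Function.leftLim F x) = 0
    rw [hleft, sub_self, ENNReal.ofReal_zero]
  have hIic : ρ (Iic c) = 0 := by
    rw [hρdef, StF.measure_Iic hbot]
    show ENNReal.ofReal (F c - f c) = 0
    rw [hclampbot c le_rfl, sub_self, ENNReal.ofReal_zero]
  have hIoi : ρ (Ioi 1) = 0 := by
    have h1 : ρ (Ici 1) = 0 := by
      rw [hρdef, StF.measure_Ici htop]
      show ENNReal.ofReal (F 1 - Function.leftLim F 1) = 0
      rw [hleft, sub_self, ENNReal.ofReal_zero]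
    exact measure_mono_null Ioi_subset_Ici_self h1
  have hmid : ρ (Ioo c 1 \ KS f c) = 0 := by
    apply measure_null_of_locally_null
    intro x hx
    have hopen : IsOpen ((KS f c)ᶜ ∩ Ioo c 1) :=
      ((KS_closed hc h0c hc1.le).isOpen_compl).inter isOpen_Ioo
    obtain ⟨ε, hε, hball⟩ := Metric.isOpen_iff.mp hopen x ⟨hx.2, hx.1⟩
    set δ := ε / 2 with hδdef
    have hδ : 0 < δ := by positivity
    have hsub : Icc (x - δ) (x + δ) ⊆ (KS f c)ᶜ ∩ Ioo c 1 := by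
      intro y hy
      apply hball
      rw [Metric.mem_ball, Real.dist_eq, abs_sub_lt_iff]
      constructor <;> [linarith [hy.2]; linarith [hy.1]]
    have hmem1 : x - δ ∈ Icc c 1 := by
      have := hsub ⟨le_rfl, by linarith⟩
      exact ⟨this.2.1.le, this.2.2.le⟩
    have hmem2 : x + δ ∈ Icc c 1 := by
      have := hsub ⟨by linarith, le_rfl⟩
      exact ⟨this.2.1.le, this.2.2.le⟩
    have hconst : F (x + δ) = F (x - δ) := by
      apply RF_const hc h0c hmem1 hmem2 (by linarith)
      rw [eq_empty_iff_forall_notMem]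
      intro y hy
      exact (hsub hy.1).1 hy.2
    refine ⟨(Ioo c 1 \ KS f c) ∩ Ioo (x - δ) (x + δ),
      inter_mem_nhdsWithin _ (Ioo_mem_nhds (by linarith) (by linarith)), ?_⟩
    apply measure_mono_null (t := Ioc (x - δ) (x + δ))
    · exact fun y hy => ⟨hy.2.1, hy.2.2.le⟩
    · rw [hρdef, StieltjesFunction.measure_Ioc]
      show ENNReal.ofReal (F (x + δ) - F (x - δ)) = 0
      rw [hconst, sub_self, ENNReal.ofReal_zero]
  have hS'meas : MeasurableSet (KS f c \ {c}) :=
    ((KS_closed hc h0c hc1.le).measurableSet).diff (measurableSet_singleton c)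
  have hcompl : ρ ((KS f c \ {c})ᶜ) = 0 := by
    apply measure_mono_null (t := Iic c ∪ ((Ioo c 1 \ KS f c) ∪ ({1} ∪ Ioi 1)))
    · intro y hy
      rcases le_or_gt y c with h | h
      · exact Or.inl h
      rcases lt_or_ge (1:ℝ) y with h1 | h1
      · exact Or.inr (Or.inr (Or.inr h1))
      rcases eq_or_lt_of_le h1 with h2 | h2
      · exact Or.inr (Or.inr (Or.inl h2))
      by_cases hKS : y ∈ KS f c
      · exfalso
        exact hy ⟨hKS, by intro hyc; rw [mem_singleton_iff] at hyc; exact absurd (hyc ▸ h) (lt_irrefl c)⟩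
      · exact Or.inr (Or.inl ⟨⟨h, h2⟩, hKS⟩)
    · rw [measure_union_null_iff]
      refine ⟨hIic, ?_⟩
      rw [measure_union_null_iff]
      refine ⟨hmid, ?_⟩
      rw [measure_union_null_iff]
      exact ⟨hsingleton 1, hIoi⟩
  have huniv : ρ univ = ENNReal.ofReal (F 1 - f c) := StF.measure_univ hbot htop
  have hρS' : ρ (KS f c \ {c}) = ENNReal.ofReal (F 1 - f c) := by
    have := measure_add_measure_compl (μ := ρ) hS'meas
    rw [hcompl, add_zero] at this
    rw [this, huniv]
  have hρpos : 0 < ρ (KS f c \ {c}) := by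
    rw [hρS']
    obtain ⟨z, hz, hfz⟩ := hne
    have : f z ≤ F 1 := le_trans (le_RF hc h0c hz) (hFle1 z)
    exact ENNReal.ofReal_pos.mpr (by linarith)
  -- the homeomorphism H = id + F and its inverse K
  set H : ℝ → ℝ := fun x => x + F x with hHdef
  have hHmono : StrictMono H := fun a b hab => by
    have := hFm hab.le
    simp only [hHdef]
    linarith
  have hHcont : Continuous H := continuous_id.add hFcont
  have hHsurj : Function.Surjective H := by
    apply hHcont.surjective
    · apply tendsto_atTop_mono (fun x => ?_) (tendsto_atTop_add_const_right _ (f c) tendsto_id)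
      show x + f c ≤ x + F x
      linarith [hfc_le x]
    · apply tendsto_atBot_mono (fun x => ?_) (tendsto_atBot_add_const_right _ (F 1) tendsto_id)
      show x + F x ≤ x + F 1
      linarith [hFle1 x]
  set e : ℝ ≃o ℝ := StrictMono.orderIsoOfSurjective H hHmono hHsurj with hedef
  have hecoe : ⇑e = H := StrictMono.coe_orderIsoOfSurjective H hHmono hHsurj
  set K : ℝ → ℝ := ⇑e.symm with hKdef
  have hKH : ∀ x, K (H x) = x := by
    intro x
    rw [hKdef, ← hecoe]
    exact e.symm_apply_apply x
  have hHK : ∀ y, H (K y) = y := by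
    intro y
    rw [hKdef, ← hecoe]
    exact e.apply_symm_apply y
  have hKmono : StrictMono K := e.symm.strictMono
  have hKcont : Continuous K := e.symm.continuous
  have hKmeas : Measurable K := hKcont.measurable
  have hKdiff : ∀ a b : ℝ, a ≤ b → K b - K a ≤ b - a := by
    intro a b hab
    have h1 : K a ≤ K b := hKmono.monotone hab
    have h2 : F (K a) ≤ F (K b) := hFm h1
    have e1 : K a + F (K a) = a := hHK a
    have e2 : K b + F (K b) = b := hHK b
    linarith
  have hKlip : LipschitzWith 1 K := by
    apply LipschitzWith.of_dist_le_mul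
    intro a b
    rw [Real.dist_eq, Real.dist_eq, NNReal.coe_one, one_mul]
    rcases le_total a b with h | h
    · rw [abs_of_nonpos (by simp [sub_nonpos, hKmono.monotone h]),
        abs_of_nonpos (by simpa [sub_nonpos] using h)]
      have := hKdiff a b h
      linarith
    · rw [abs_of_nonneg (by simp [sub_nonneg, hKmono.monotone h]),
        abs_of_nonneg (by simpa [sub_nonneg] using h)]
      exact hKdiff b a h
  -- identify volume.map K with the Stieltjes measure of H
  set StH : StieltjesFunction ℝ := ⟨H, hHmono.monotone, fun x => hHcont.continuousWithinAt⟩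
    with hStHdef
  have hleftH : ∀ x, Function.leftLim H x = H x := fun x =>
    leftLim_eq_of_tendsto
      ((hHcont.tendsto x).mono_left nhdsWithin_le_nhds)
  have hpre : ∀ a b : ℝ, K ⁻¹' (Ioo a b) = Ioo (H a) (H b) := by
    intro a b
    ext u
    simp only [mem_preimage, mem_Ioo]
    constructor
    · rintro ⟨h1, h2⟩
      constructor
      · have := hHmono h1; rwa [hHK] at this
      · have := hHmono h2; rwa [hHK] at this
    · rintro ⟨h1, h2⟩
      constructor
      · have := hKmono h1; rwa [hKH] at this
      · have := hKmono h2; rwa [hKH] at this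
  haveI hmapLF : IsLocallyFiniteMeasure (volume.map K) := by
    constructor
    intro x
    refine ⟨Ioo (x - 1) (x + 1), Ioo_mem_nhds (by linarith) (by linarith), ?_⟩
    rw [Measure.map_apply hKmeas measurableSet_Ioo, hpre, Real.volume_Ioo]
    exact ENNReal.ofReal_lt_top
  have hmapeq : volume.map K = StH.measure := by
    refine Real.measure_ext_Ioo_rat fun p q => ?_
    rw [Measure.map_apply hKmeas measurableSet_Ioo, hpre, Real.volume_Ioo,
      StieltjesFunction.measure_Ioo]
    show ENNReal.ofReal (H q - H p) = ENNReal.ofReal (Function.leftLim H q - H p)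
    rw [hleftH]
  have haddeq : StH.measure = volume + ρ := by
    refine Real.measure_ext_Ioo_rat fun p q => ?_
    rw [Measure.add_apply, StieltjesFunction.measure_Ioo, StieltjesFunction.measure_Ioo,
      Real.volume_Ioo]
    show ENNReal.ofReal (Function.leftLim H q - H p)
      = ENNReal.ofReal ((q:ℝ) - p) + ENNReal.ofReal (Function.leftLim F q - F p)
    rw [hleftH, hleft]
    rcases le_total (q:ℝ) p with h | h
    · rw [ENNReal.ofReal_eq_zero.mpr, ENNReal.ofReal_eq_zero.mpr, ENNReal.ofReal_eq_zero.mpr]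
      · simp
      · linarith [hFm h]
      · linarith
      · have := hFm h; simp only [hHdef]; linarith
    · have hFpq : F p ≤ F q := hFm h
      have : H q - H p = ((q:ℝ) - p) + (F q - F p) := by simp only [hHdef]; ring
      rw [this, ENNReal.ofReal_add (by linarith) (by linarith)]
  have hvolpre : volume (K ⁻¹' (KS f c \ {c})) = ρ (KS f c \ {c}) := by
    rw [← Measure.map_apply hKmeas hS'meas, hmapeq, haddeq, Measure.add_apply, hnull, zero_add]
  -- Rademacher + Jacobian: find u with deriv K u = 0
  set D := {u : ℝ | DifferentiableAt ℝ K u} with hDdef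
  have hDmeas : MeasurableSet D := measurableSet_of_differentiableAt ℝ K
  set E := K ⁻¹' (KS f c \ {c}) ∩ D with hEdef
  have hEmeas : MeasurableSet E := (hKmeas hS'meas).inter hDmeas
  have hDc : volume Dᶜ = 0 := by
    have hrad : ∀ᵐ u : ℝ, DifferentiableAt ℝ K u := hKlip.ae_differentiableAt
    exact hrad
  have hEvol : volume E ≠ 0 := by
    intro h0
    have : volume (K ⁻¹' (KS f c \ {c})) = 0 := by
      have hsub : K ⁻¹' (KS f c \ {c}) ⊆ E ∪ Dᶜ := by
        intro u hu
        by_cases hd : u ∈ D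
        · exact Or.inl ⟨hu, hd⟩
        · exact Or.inr hd
      exact measure_mono_null hsub (measure_union_null h0 hDc)
    rw [hvolpre] at this
    exact hρpos.ne' this
  have hder : ∀ u ∈ E, HasFDerivWithinAt K
      ((1 : ℝ →L[ℝ] ℝ).smulRight (deriv K u)) E u := fun u hu =>
    (hu.2.hasDerivAt.hasDerivWithinAt).hasFDerivWithinAt
  have hinj : InjOn K E := hKmono.injective.injOn
  have hjac := MeasureTheory.lintegral_abs_det_fderiv_le_addHaar_image volume hEmeas hder hinj
  have himg : volume (K '' E) = 0 := by
    apply measure_mono_null _ hnull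
    intro y hy
    obtain ⟨u, hu, rfl⟩ := hy
    exact hu.1
  have hint0 : (∫⁻ u in E, ENNReal.ofReal |deriv K u| ∂volume) = 0 := by
    apply le_antisymm _ zero_le
    calc (∫⁻ u in E, ENNReal.ofReal |deriv K u| ∂volume)
        = ∫⁻ u in E, ENNReal.ofReal |((1 : ℝ →L[ℝ] ℝ).smulRight (deriv K u)).det| ∂volume := by
          simp only [ContinuousLinearMap.smulRight_one_eq_toSpanSingleton, ContinuousLinearMap.det_toSpanSingleton]
      _ ≤ volume (K '' E) := hjac
      _ = 0 := himg
  have haezero' := (MeasureTheory.lintegral_eq_zero_iff'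
      (((measurable_deriv K).abs).ennreal_ofReal.aemeasurable (μ := volume.restrict E))).mp hint0
  have haezero : ∀ᵐ u ∂(volume.restrict E), ENNReal.ofReal |deriv K u| = 0 := by
    filter_upwards [haezero'] with u hu
    simpa using hu
  have hmemae : ∀ᵐ u ∂(volume.restrict E), u ∈ E := ae_restrict_mem hEmeas
  haveI : (ae (volume.restrict E)).NeBot := by
    rw [ae_neBot, Ne, Measure.restrict_eq_zero]
    exact hEvol
  obtain ⟨u, hu0, huE⟩ := (haezero.and hmemae).exists
  have hder0 : deriv K u = 0 := by
    have : |deriv K u| ≤ 0 := by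
      by_contra h
      push_neg at h
      rw [ENNReal.ofReal_eq_zero] at hu0
      linarith
    exact abs_nonpos_iff.mp this
  -- the good point
  set x := K u with hxdef
  have hxS : x ∈ KS f c \ {c} := huE.1
  have hxIcc : x ∈ Icc c 1 := hxS.1.1
  have hxc : c < x := lt_of_le_of_ne hxIcc.1 (by
    intro h; exact hxS.2 (by rw [mem_singleton_iff, ← h]))
  have hfxFx : f x = F x := hxS.1.2
  refine ⟨x, ⟨hxc, hxIcc.2⟩, ?_⟩
  rw [EReal.tendsto_nhds_top_iff_real]
  intro M
  set M' : ℝ := max M 0 with hM'def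
  have hM'M : M ≤ M' := le_max_left _ _
  have hM'0 : 0 ≤ M' := le_max_right _ _
  set ε : ℝ := 1 / (M' + 1) with hεdef
  have hε : 0 < ε := by positivity
  -- slope of K at u tends to 0
  have hKd : HasDerivAt K 0 u := by
    have := huE.2.hasDerivAt
    rwa [hder0] at this
  rw [hasDerivAt_iff_tendsto_slope] at hKd
  have hHx : H x = u := hHK u
  have hHtend : Tendsto H (𝓝[Ico 0 x] x) (𝓝[≠] u) := by
    apply tendsto_nhdsWithin_of_tendsto_nhds_of_eventually_within
    · have := (hHcont.tendsto x).mono_left (nhdsWithin_le_nhds (s := Ico 0 x))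
      rwa [hHx] at this
    · filter_upwards [self_mem_nhdsWithin] with y hy
      have : H y < H x := hHmono hy.2
      rw [hHx] at this
      exact this.ne
  have hslope : ∀ᶠ y in 𝓝[Ico 0 x] x, |slope K u (H y)| < ε := by
    have h1 : ∀ᶠ w in 𝓝 (0:ℝ), |w| < ε := by
      have := eventually_abs_sub_lt (0:ℝ) hε
      simpa using this
    exact hHtend.eventually (hKd.eventually h1)
  have hIoic : ∀ᶠ y in 𝓝[Ico 0 x] x, y ∈ Ioi c := by
    have hmem : Ioi c ∈ 𝓝[Ico 0 x] x := mem_nhdsWithin_of_mem_nhds (Ioi_mem_nhds hxc)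
    exact eventually_mem_set.mpr hmem
  filter_upwards [self_mem_nhdsWithin, hslope, hIoic] with y hy hsl hyc
  -- now the computation
  have hyx : y < x := hy.2
  have hHy : H y < u := by
    have := hHmono hyx
    rwa [hHx] at this
  have hKHy : K (H y) = y := hKH y
  have hslval : slope K u (H y) = (y - x) / (H y - u) := by
    rw [slope_def_field, hKHy, hxdef]
  rw [hslval] at hsl
  have habs : (x - y) / (u - H y) < ε := by
    have : (y - x) / (H y - u) = (x - y) / (u - H y) := by
      rw [← neg_sub x y, ← neg_sub u (H y), neg_div_neg_eq]
    rw [this] at hsl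
    calc (x - y) / (u - H y) ≤ |(x - y) / (u - H y)| := le_abs_self _
      _ < ε := hsl
  have hupos : 0 < u - H y := by linarith
  have hxy : 0 < x - y := by linarith
  have hkey : x - y < ε * (u - H y) := by
    rw [div_lt_iff₀ hupos] at habs
    linarith
  -- transfer to F
  have hFdiff : M' * (x - y) < F x - F y := by
    have h1 : u - H y = (x - y) + (F x - F y) := by
      rw [← hHx]; simp only [hHdef]; ring
    have h2 : x - y < ε * ((x - y) + (F x - F y)) := by rw [← h1]; exact hkey
    have h3 : (M' + 1) * (x - y) < (x - y) + (F x - F y) := by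
      have hεinv : (M' + 1) = 1 / ε := by rw [hεdef]; field_simp
      calc (M' + 1) * (x - y) = (1/ε) * (x - y) := by rw [hεinv]
        _ < (1/ε) * (ε * ((x - y) + (F x - F y))) := by
            apply mul_lt_mul_of_pos_left h2 (by positivity)
        _ = (x - y) + (F x - F y) := by field_simp
    linarith
  -- transfer to f
  have hyIcc : y ∈ Icc c 1 := ⟨le_of_lt hyc, hyx.le.trans hxIcc.2⟩
  have hfy : f y ≤ F y := le_RF hc h0c hyIcc
  have hfdiff : M' * (x - y) < f x - f y := by
    rw [hfxFx]
    linarith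
  have hqM : M < (f y - f x) / (y - x) := by
    have heq : (f y - f x) / (y - x) = (f x - f y) / (x - y) := by
      rw [← neg_sub (f x) (f y), ← neg_sub x y, neg_div_neg_eq]
    rw [heq, lt_div_iff₀ hxy]
    have : M * (x - y) ≤ M' * (x - y) := mul_le_mul_of_nonneg_right hM'M hxy.le
    linarith
  exact EReal.coe_lt_coe_iff.mpr hqM

end S6

/-- A continuous function with a knot point at almost every point of `[0,1]` is not a
Besicovitch function (a one-sided derivative, finite or infinite, exists somewhere). -/
theorem stmt6 (f : ℝ → ℝ) (hc : ContinuousOn f (Set.Icc 0 1))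
    (hknot : ∀ᵐ x ∂(volume.restrict (Set.Icc (0:ℝ) 1)),
      DR f x = ⊤ ∧ DL f x = ⊤ ∧ Dr f x = ⊥ ∧ Dl f x = ⊥) :
    ¬ ((∀ t ∈ Set.Ico (0:ℝ) 1, DR f t ≠ Dr f t) ∧
       (∀ t ∈ Set.Ioc (0:ℝ) 1, DL f t ≠ Dl f t)) := by
  rintro ⟨hA, hB⟩
  by_cases hex : ∃ c ∈ Ico (0:ℝ) 1, ∃ z ∈ Icc c 1, f c < f z
  · obtain ⟨c, hcIco, hne⟩ := hex
    -- the contact set is Lebesgue-null since its points are not knot points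
    have hnull : volume (S6.KS f c \ {c}) = 0 := by
      have h1 : (volume.restrict (Set.Icc (0:ℝ) 1))
          {x | ¬ (DR f x = ⊤ ∧ DL f x = ⊤ ∧ Dr f x = ⊥ ∧ Dl f x = ⊥)} = 0 :=
        ae_iff.mp hknot
      rw [Measure.restrict_apply' measurableSet_Icc] at h1
      apply measure_mono_null _ h1
      intro x hx
      have hxIcc : x ∈ Icc c 1 := hx.1.1
      have hxc : c < x := lt_of_le_of_ne hxIcc.1 (fun h => hx.2 (by rw [mem_singleton_iff, ← h]))
      refine ⟨?_, ⟨hcIco.1.trans hxIcc.1, hxIcc.2⟩⟩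
      intro hP
      -- x has Dl f x ≥ 0, contradicting Dl f x = ⊥
      have hev : ∀ᶠ y in 𝓝[Ico 0 x] x, (0:EReal) ≤ ((f y - f x) / (y - x) : ℝ) := by
        have hmem : Ioi c ∈ 𝓝[Ico 0 x] x := mem_nhdsWithin_of_mem_nhds (Ioi_mem_nhds hxc)
        filter_upwards [self_mem_nhdsWithin, eventually_mem_set.mpr hmem] with y hy hyc
        have hyIcc : y ∈ Icc c 1 := ⟨le_of_lt hyc, hy.2.le.trans hxIcc.2⟩
        have h2 : f y ≤ f x := by
          calc f y ≤ S6.RF f c y := S6.le_RF hc hcIco.1 hyIcc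
            _ ≤ S6.RF f c x := S6.RF_mono hc hcIco.1 hcIco.2.le hy.2.le
            _ = f x := hx.1.2.symm
        have hden : y - x < 0 := by linarith [hy.2]
        have : (0:ℝ) ≤ (f y - f x) / (y - x) := by
          rw [div_nonneg_iff]
          exact Or.inr ⟨by linarith, hden.le⟩
        exact_mod_cast EReal.coe_le_coe_iff.mpr this
      have h0le : (0:EReal) ≤ Dl f x := le_liminf_of_le (by isBoundedDefault) hev
      rw [hP.2.2.2] at h0le
      simp at h0le
    obtain ⟨x, hxIoc, htend⟩ := S6.key hc hcIco.1 hcIco.2 hne hnull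
    have h0x : (0:ℝ) < x := lt_of_le_of_lt hcIco.1 hxIoc.1
    haveI hnb : (𝓝[Ico 0 x] x).NeBot := by
      have h1 : (𝓝[Ioo 0 x] x).NeBot := by
        apply mem_closure_iff_nhdsWithin_neBot.mp
        rw [closure_Ioo h0x.ne]
        exact ⟨h0x.le, le_rfl⟩
      exact h1.mono (nhdsWithin_mono x Ioo_subset_Ico_self)
    have hDL : DL f x = ⊤ := htend.limsup_eq
    have hDl : Dl f x = ⊤ := htend.liminf_eq
    exact hB x ⟨h0x, hxIoc.2⟩ (hDL.trans hDl.symm)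
  · push_neg at hex
    -- f is nonincreasing; but a knot point has DR = ⊤
    have hres_ne : volume.restrict (Set.Icc (0:ℝ) 1) ≠ 0 := by
      intro h
      have h2 : volume.restrict (Set.Icc (0:ℝ) 1) univ = 0 := by rw [h]; simp
      rw [Measure.restrict_apply_univ, Real.volume_Icc] at h2
      norm_num at h2
    haveI : (ae (volume.restrict (Set.Icc (0:ℝ) 1))).NeBot := ae_neBot.mpr hres_ne
    have h1 : ∀ᵐ x ∂(volume.restrict (Set.Icc (0:ℝ) 1)), x ∈ Icc (0:ℝ) 1 :=
      ae_restrict_mem measurableSet_Icc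
    have h2 : ∀ᵐ x ∂(volume.restrict (Set.Icc (0:ℝ) 1)), x ≠ 1 := by
      rw [ae_iff]
      have : {x : ℝ | ¬ x ≠ 1} = {1} := by ext y; simp
      rw [this]
      apply le_antisymm _ zero_le
      calc volume.restrict (Set.Icc (0:ℝ) 1) {1} ≤ volume {1} := Measure.restrict_le_self _
        _ = 0 := Real.volume_singleton
    obtain ⟨x₀, hk, hIcc, hne1⟩ := (hknot.and (h1.and h2)).exists
    have hx₀ : x₀ ∈ Ico (0:ℝ) 1 := ⟨hIcc.1, lt_of_le_of_ne hIcc.2 hne1⟩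
    have hDRle : DR f x₀ ≤ 0 := by
      apply limsup_le_of_le (by isBoundedDefault)
      filter_upwards [self_mem_nhdsWithin] with z hz
      have hfz : f z ≤ f x₀ := hex x₀ hx₀ z ⟨hz.1.le, hz.2⟩
      have hden : (0:ℝ) < z - x₀ := by linarith [hz.1]
      have : (f z - f x₀) / (z - x₀) ≤ 0 := div_nonpos_of_nonpos_of_nonneg (by linarith) hden.le
      exact_mod_cast EReal.coe_le_coe_iff.mpr this
    rw [hk.1] at hDRle
    simp at hDRle
end

section
/- The set of Besicovitch functions in C(λ) is meager (first category) in C(λ) with the uniform metric. -/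
open MeasureTheory Filter

/-- The unit interval as a subtype of `ℝ`. -/
abbrev II : Set ℝ := Set.Icc 0 1

/-- `C(λ)`: continuous Lebesgue-measure-preserving surjections of `[0,1]`, with the sup
metric inherited from `C([0,1],[0,1])`. -/
abbrev Clam : Type :=
  {f : C(II, II) // Function.Surjective f ∧
    ∀ A : Set II, MeasurableSet A → volume (f ⁻¹' A) = volume A}

/-- Upper right Dini derivative for maps of the unit interval. -/
noncomputable def DRs (f : II → II) (t : II) : EReal :=
  Filter.limsup (fun x => ((((f x : ℝ) - (f t : ℝ)) / ((x : ℝ) - (t : ℝ)) : ℝ) : EReal))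
    (nhdsWithin t (Set.Ioi t))

/-- Lower right Dini derivative. -/
noncomputable def Drs (f : II → II) (t : II) : EReal :=
  Filter.liminf (fun x => ((((f x : ℝ) - (f t : ℝ)) / ((x : ℝ) - (t : ℝ)) : ℝ) : EReal))
    (nhdsWithin t (Set.Ioi t))

/-- Upper left Dini derivative. -/
noncomputable def DLs (f : II → II) (t : II) : EReal :=
  Filter.limsup (fun x => ((((f x : ℝ) - (f t : ℝ)) / ((x : ℝ) - (t : ℝ)) : ℝ) : EReal))
    (nhdsWithin t (Set.Iio t))

/-- Lower left Dini derivative. -/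
noncomputable def Dls (f : II → II) (t : II) : EReal :=
  Filter.liminf (fun x => ((((f x : ℝ) - (f t : ℝ)) / ((x : ℝ) - (t : ℝ)) : ℝ) : EReal))
    (nhdsWithin t (Set.Iio t))

/-- A Besicovitch function: no one-sided derivative, finite or infinite, exists anywhere. -/
def Besicovitch (f : II → II) : Prop :=
  (∀ t : II, (t : ℝ) < 1 → DRs f t ≠ Drs f t) ∧ (∀ t : II, 0 < (t : ℝ) → DLs f t ≠ Dls f t)

open Set Topology
open scoped ENNReal NNReal

/-- Vitali-type claim: the set of points where a monotone function has upper right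
Dini derivative ≥ c, with image constrained in an open set U, has measure ≤ vol(U)/c. -/
lemma vitali_claim (ψ : ℝ → ℝ) (hψ : Monotone ψ) {a b : ℝ} (U : Set ℝ) (hU : IsOpen U)
    (himg : ∀ y ∈ Set.Ioo a b, ψ y ∈ U) (c : ℝ) (hc : 0 < c) :
    volume {y | y ∈ Set.Ioo a b ∧ ContinuousAt ψ y ∧
      ∀ δ > 0, ∃ k, 0 < k ∧ k < δ ∧ c * k < ψ (y + k) - ψ y ∧ y + k < b}
      ≤ (ENNReal.ofReal (1/c)) * volume U := by
  set E := {y | y ∈ Set.Ioo a b ∧ ContinuousAt ψ y ∧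
      ∀ δ > 0, ∃ k, 0 < k ∧ k < δ ∧ c * k < ψ (y + k) - ψ y ∧ y + k < b} with hE
  set T : Set (ℝ × ℝ) := {p | p.1 ∈ E ∧ 0 < p.2 ∧ p.1 + p.2 < b ∧
      c * p.2 ≤ ψ (p.1 + p.2) - ψ p.1 ∧ Set.Icc (ψ p.1) (ψ (p.1 + p.2)) ⊆ U} with hT
  obtain ⟨u, huT, hucount, hudisj, hucover⟩ :=
    Vitali.exists_disjoint_covering_ae volume E T 6 Prod.snd Prod.fst
      (fun p => Set.Icc p.1 (p.1 + p.2))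
      (by
        rintro ⟨y, k⟩ ⟨-, hk, -, -, -⟩
        rw [Real.closedBall_eq_Icc]
        exact Set.Icc_subset_Icc (by linarith) le_rfl)
      (by
        rintro ⟨y, k⟩ ⟨-, hk, -, -, -⟩
        rw [Real.volume_closedBall, Real.volume_Icc]
        have h6 : ((6:ℝ≥0) : ℝ≥0∞) * ENNReal.ofReal (y + k - y)
            = ENNReal.ofReal (6 * (y + k - y)) := by
          rw [ENNReal.ofReal_mul (by norm_num)]
          norm_num
        rw [h6]
        exact le_of_eq (by ring_nf))
      (by
        rintro ⟨y, k⟩ ⟨-, hk, -, -, -⟩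
        rw [interior_Icc]
        exact ⟨y + k/2, by constructor <;> simp <;> linarith⟩)
      (fun p _ => isClosed_Icc)
      (by
        rintro y hy ε hε
        obtain ⟨hyI, hycont, hyfreq⟩ := hy
        obtain ⟨η, hη, hball⟩ := Metric.isOpen_iff.1 hU (ψ y) (himg y hyI)
        obtain ⟨ρ, hρ, hρball⟩ := Metric.continuousAt_iff.1 hycont η hη
        obtain ⟨k, hk0, hkδ, hkgrow, hkb⟩ := hyfreq (min ε ρ) (lt_min hε hρ)
        refine ⟨(y, k), ⟨⟨hyI, hycont, hyfreq⟩, hk0, hkb, hkgrow.le, ?_⟩, (le_min_iff.1 hkδ.le).1, rfl⟩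
        intro z hz
        apply hball
        have h1 : dist (y + k) y < ρ := by
          rw [Real.dist_eq, abs_of_pos (by linarith : (0:ℝ) < y + k - y)]
          have := (lt_min_iff.1 hkδ).2
          linarith
        have h2 := hρball h1
        rw [Real.dist_eq] at h2
        have h3 : ψ y ≤ z := hz.1
        have h4 : z ≤ ψ (y + k) := hz.2
        have h5 : ψ (y+k) - ψ y < η := lt_of_abs_lt h2
        rw [Metric.mem_ball, Real.dist_eq, abs_lt]
        constructor <;> linarith)
  -- measure computation
  have hEsub : volume E ≤ volume (⋃ p ∈ u, Set.Icc p.1 (p.1 + p.2)) := by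
    calc volume E ≤ volume ((E \ ⋃ p ∈ u, Set.Icc p.1 (p.1 + p.2)) ∪
        (⋃ p ∈ u, Set.Icc p.1 (p.1 + p.2))) := measure_mono (by intro x hx; by_cases h : x ∈ ⋃ p ∈ u, Set.Icc p.1 (p.1+p.2) <;> [exact Or.inr h; exact Or.inl ⟨hx, h⟩])
      _ ≤ volume (E \ ⋃ p ∈ u, Set.Icc p.1 (p.1 + p.2)) + volume (⋃ p ∈ u, Set.Icc p.1 (p.1+p.2)) := measure_union_le _ _
      _ = volume (⋃ p ∈ u, Set.Icc p.1 (p.1+p.2)) := by rw [hucover, zero_add]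
  have himgdisj : u.PairwiseDisjoint (fun p : ℝ × ℝ => Set.Ioo (ψ p.1) (ψ (p.1 + p.2))) := by
    intro p hp q hq hpq
    have hdisj : Disjoint (Set.Icc p.1 (p.1+p.2)) (Set.Icc q.1 (q.1+q.2)) := hudisj hp hq hpq
    show Disjoint (Set.Ioo (ψ p.1) (ψ (p.1+p.2))) (Set.Ioo (ψ q.1) (ψ (q.1+q.2)))
    have hp' := huT hp; have hq' := huT hq
    have hcases : p.1 + p.2 < q.1 ∨ q.1 + q.2 < p.1 := by
      by_contra h
      push_neg at h
      exact (Set.disjoint_left.1 hdisj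
        (show max p.1 q.1 ∈ _ from ⟨le_max_left _ _, max_le (by linarith [hp'.2.1]) h.1⟩))
        ⟨le_max_right _ _, max_le h.2 (by linarith [hq'.2.1])⟩
    rcases hcases with h | h
    · have : ψ (p.1 + p.2) ≤ ψ q.1 := hψ h.le
      rw [Set.disjoint_left]
      rintro z ⟨-, hz2⟩ ⟨hz3, -⟩
      linarith
    · have : ψ (q.1 + q.2) ≤ ψ p.1 := hψ h.le
      rw [Set.disjoint_left]
      rintro z ⟨hz1, -⟩ ⟨-, hz4⟩
      linarith
  calc volume E ≤ volume (⋃ p ∈ u, Set.Icc p.1 (p.1 + p.2)) := hEsub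
    _ ≤ ∑' p : u, volume (Set.Icc (p : ℝ × ℝ).1 ((p : ℝ × ℝ).1 + (p : ℝ × ℝ).2)) :=
        measure_biUnion_le volume hucount _
    _ ≤ ∑' p : u, ENNReal.ofReal (1/c) * volume (Set.Ioo (ψ (p : ℝ × ℝ).1) (ψ ((p : ℝ × ℝ).1 + (p : ℝ × ℝ).2))) := by
        apply ENNReal.tsum_le_tsum
        rintro ⟨⟨y, k⟩, hp⟩
        have hp' := huT hp
        obtain ⟨-, hk, -, hgrow, -⟩ := hp'
        rw [Real.volume_Icc, Real.volume_Ioo, ← ENNReal.ofReal_mul (by positivity)]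
        apply ENNReal.ofReal_le_ofReal
        rw [div_mul_eq_mul_div, one_mul, le_div_iff₀ hc]
        calc (y + k - y) * c = c * k := by ring
          _ ≤ ψ (y + k) - ψ y := hgrow
    _ = ENNReal.ofReal (1/c) * ∑' p : u, volume (Set.Ioo (ψ (p : ℝ × ℝ).1) (ψ ((p : ℝ × ℝ).1 + (p : ℝ × ℝ).2))) := ENNReal.tsum_mul_left
    _ = ENNReal.ofReal (1/c) * volume (⋃ p ∈ u, Set.Ioo (ψ (p : ℝ × ℝ).1) (ψ ((p : ℝ × ℝ).1 + (p : ℝ × ℝ).2))) := by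
        rw [measure_biUnion hucount himgdisj (fun p _ => measurableSet_Ioo)]
    _ ≤ ENNReal.ofReal (1/c) * volume U := by
        gcongr
        refine Set.iUnion₂_subset fun p hp => ?_
        have hp' := huT hp
        exact subset_trans (Set.Ioo_subset_Icc_self) hp'.2.2.2.2

/-- A monotone function with null image on an interval has right Dini derivative 0
at some point of the interval. -/
lemma exists_right_dini_zero (ψ : ℝ → ℝ) (hψ : Monotone ψ) {a b : ℝ} (hab : a < b)
    (hnull : volume (ψ '' (Set.Ioo a b)) = 0) :
    ∃ y ∈ Set.Ioo a b, ∀ M : ℝ, 0 < M → ∃ δ > 0, ∀ k : ℝ, 0 < k → k < δ →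
      ψ (y + k) - ψ y ≤ k / M := by
  -- each bad set has measure zero
  have key : ∀ c : ℝ, 0 < c → volume {y | y ∈ Set.Ioo a b ∧ ContinuousAt ψ y ∧
      ∀ δ > 0, ∃ k, 0 < k ∧ k < δ ∧ c * k < ψ (y + k) - ψ y ∧ y + k < b} = 0 := by
    intro c hc
    set E := {y | y ∈ Set.Ioo a b ∧ ContinuousAt ψ y ∧
      ∀ δ > 0, ∃ k, 0 < k ∧ k < δ ∧ c * k < ψ (y + k) - ψ y ∧ y + k < b} with hEdef
    have hlt : ∀ ε : ℝ≥0∞, 0 < ε → volume E ≤ ENNReal.ofReal (1/c) * ε := by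
      intro ε hε
      set T := toMeasurable volume (ψ '' (Set.Ioo a b)) with hTdef
      have hT0 : volume T = 0 := by rw [hTdef, measure_toMeasurable]; exact hnull
      obtain ⟨U, hTU, hUopen, hUlt⟩ := Set.exists_isOpen_lt_of_lt T ε (by rw [hT0]; exact hε)
      refine le_trans (vitali_claim ψ hψ U hUopen
        (fun y hy => hTU (subset_toMeasurable _ _ (Set.mem_image_of_mem ψ hy))) c hc) ?_
      exact mul_le_mul_right hUlt.le _
    have hfin : volume E ≠ ⊤ := by
      have : volume E ≤ volume (Set.Ioo a b) := measure_mono (fun y hy => hy.1)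
      rw [Real.volume_Ioo] at this
      exact ne_top_of_le_ne_top ENNReal.ofReal_ne_top this
    by_contra h
    have hpos : 0 < volume E := pos_iff_ne_zero.2 h
    have hc' : ENNReal.ofReal (1/c) ≠ ⊤ := ENNReal.ofReal_ne_top
    -- choose ε small enough that ofReal(1/c) * ε < volume E
    obtain ⟨ε, hε0, hεlt⟩ : ∃ ε : ℝ≥0∞, 0 < ε ∧ ENNReal.ofReal (1/c) * ε < volume E := by
      rcases eq_or_ne (ENNReal.ofReal (1/c)) 0 with h0 | h0
      · exact ⟨1, one_pos, by rw [h0, zero_mul]; exact hpos⟩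
      · refine ⟨volume E / (2 * ENNReal.ofReal (1/c)), ?_, ?_⟩
        · exact ENNReal.div_pos (ne_of_gt hpos) (by
            exact ENNReal.mul_ne_top (by norm_num) hc')
        · rw [ENNReal.div_eq_inv_mul, ← mul_assoc]
          have : ENNReal.ofReal (1/c) * (2 * ENNReal.ofReal (1/c))⁻¹ = 2⁻¹ := by
            rw [ENNReal.mul_inv (Or.inl (by norm_num)) (Or.inl (by norm_num))]
            rw [← mul_assoc, mul_comm]
            rw [← mul_assoc]
            rw [ENNReal.inv_mul_cancel h0 hc', one_mul]
          rw [this, ← ENNReal.div_eq_inv_mul]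
          exact ENNReal.half_lt_self (ne_of_gt hpos) hfin
    exact absurd (hlt ε hε0) (not_le.2 hεlt)
  -- the countable set of discontinuities
  have hDc : {x | ¬ ContinuousAt ψ x}.Countable := hψ.countable_not_continuousAt
  -- total bad set
  set Eset : ℕ → Set ℝ := fun n => {y | y ∈ Set.Ioo a b ∧ ContinuousAt ψ y ∧
      ∀ δ > 0, ∃ k, 0 < k ∧ k < δ ∧ (1/(n+1:ℝ)) * k < ψ (y + k) - ψ y ∧ y + k < b} with hEset
  set Bad := {x | ¬ ContinuousAt ψ x} ∪ ⋃ n : ℕ, Eset n with hBad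
  have hBadnull : volume Bad = 0 := by
    rw [hBad]
    refine le_antisymm (le_trans (measure_union_le _ _) ?_) zero_le
    rw [hDc.measure_zero]
    rw [zero_add]
    refine le_trans (measure_iUnion_le _) ?_
    have hz : ∀ n : ℕ, volume (Eset n) = 0 := fun n => key (1/(n+1:ℝ)) (by positivity)
    refine le_of_eq (ENNReal.tsum_eq_zero.2 fun n => hz n)
  -- pick a good point
  have hIoo : volume (Set.Ioo a b) ≠ 0 := by
    rw [Real.volume_Ioo]
    simp only [ne_eq, ENNReal.ofReal_eq_zero, not_le]
    linarith
  have hne : ¬ (Set.Ioo a b ⊆ Bad) := by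
    intro hsub
    exact hIoo (measure_mono_null hsub hBadnull)
  obtain ⟨y, hyI, hyB⟩ := Set.not_subset.1 hne
  refine ⟨y, hyI, ?_⟩
  intro M hM
  rw [hBad, Set.mem_union] at hyB
  push_neg at hyB
  obtain ⟨hycont, hyE⟩ := hyB
  rw [Set.mem_setOf_eq, not_not] at hycont
  obtain ⟨n, hn⟩ := exists_nat_ge M
  have hyEn := hyE
  rw [Set.mem_iUnion] at hyEn
  push_neg at hyEn
  have h1 := hyEn n
  rw [hEset, Set.mem_setOf_eq] at h1
  push_neg at h1
  obtain ⟨δ, hδ0, hδ⟩ := h1 hyI hycont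
  refine ⟨min δ (b - y), lt_min hδ0 (by linarith [hyI.2]), ?_⟩
  intro k hk0 hkδ
  have hkb : y + k < b := by
    have := lt_min_iff.1 hkδ
    linarith [this.2]
  have h2 := hδ k hk0 (lt_of_lt_of_le hkδ (min_le_left _ _))
  have h3 : ψ (y + k) - ψ y ≤ (1/(n+1:ℝ)) * k := by
    by_contra h4
    push_neg at h4
    exact absurd hkb (not_lt.2 (h2 h4))
  calc ψ (y + k) - ψ y ≤ (1/(n+1:ℝ)) * k := h3
    _ = k / (n+1:ℝ) := by ring
    _ ≤ k / M := div_le_div_of_nonneg_left hk0.le hM (by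
        have : (M:ℝ) ≤ (n:ℝ) := hn
        linarith)

lemma ereal_eq_top_of_forall {L : EReal} (h : ∀ M : ℝ, 0 < M → (M : EReal) ≤ L) : L = ⊤ := by
  induction L with
  | bot => exact absurd (le_bot_iff.1 (h 1 one_pos)) (EReal.coe_ne_bot 1)
  | coe r =>
      have h2 := h (max 1 (r+1)) (lt_of_lt_of_le one_pos (le_max_left _ _))
      rw [EReal.coe_le_coe_iff] at h2
      linarith [le_trans (le_max_right 1 (r+1)) h2]
  | top => rfl

lemma nebot_right (t : II) (ht : (t : ℝ) < 1) : (nhdsWithin t (Set.Ioi t)).NeBot := by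
  rw [← mem_closure_iff_nhdsWithin_neBot, Metric.mem_closure_iff]
  intro ε hε
  have hm : min 1 ((t:ℝ) + ε/2) ∈ II := by
    constructor
    · exact le_min zero_le_one (by linarith [t.2.1])
    · exact min_le_left _ _
  refine ⟨⟨min 1 ((t:ℝ) + ε/2), hm⟩, ?_, ?_⟩
  · show (t:ℝ) < min 1 ((t:ℝ) + ε/2)
    exact lt_min ht (by linarith)
  · rw [Subtype.dist_eq, Real.dist_eq]
    have h1 : min 1 ((t:ℝ) + ε/2) ≤ (t:ℝ) + ε/2 := min_le_right _ _
    have h2 : (t:ℝ) < min 1 ((t:ℝ) + ε/2) := lt_min ht (by linarith)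
    rw [abs_of_neg (by linarith)]
    linarith

/-- The core lemma: a measure-preserving-type map of the unit interval whose lower right
Dini derivative is `⊥` a.e. and with `f 1 > 0` has a point with right derivative `+∞`. -/
lemma core (f : II → II) (hf : Continuous f) (hsurj : Function.Surjective f)
    (hae : ∀ᵐ x : II, Drs f x = ⊥) (hb0 : 0 < (f ⟨1, by norm_num⟩ : ℝ)) :
    ∃ t : II, (t : ℝ) < 1 ∧ DRs f t = Drs f t := by
  classical
  -- the extension of f to ℝ
  set F : ℝ → ℝ := fun x => (f (Set.projIcc 0 1 zero_le_one x) : ℝ) with hFdef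
  have hFcont : Continuous F := continuous_subtype_val.comp (hf.comp continuous_projIcc)
  have hFval : ∀ u : II, F (u : ℝ) = (f u : ℝ) := by
    intro u; simp only [hFdef, Set.projIcc_val]
  set b : ℝ := F 1 with hbdef
  have hb0' : 0 < b := by
    have h := hFval ⟨1, by norm_num⟩
    rw [hbdef, show (1:ℝ) = ((⟨1, by norm_num⟩ : II) : ℝ) from rfl, h]
    exact hb0
  have hb1 : b ≤ 1 := (f _).2.2
  -- level sets
  set Lev : ℝ → Set ℝ := fun y => {x | x ∈ Set.Icc (0:ℝ) 1 ∧ F x = y} with hLev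
  have hLevne : ∀ y ∈ Set.Ioo 0 b, (Lev y).Nonempty := by
    rintro y ⟨hy0, hyb⟩
    obtain ⟨u, hu⟩ := hsurj ⟨y, ⟨hy0.le, le_trans hyb.le hb1⟩⟩
    exact ⟨(u : ℝ), u.2, by rw [hFval, hu]⟩
  have hLevcp : ∀ y, IsCompact (Lev y) :=
    fun y => IsCompact.of_isClosed_subset isCompact_Icc
      ((isClosed_Icc).inter (isClosed_eq hFcont continuous_const)) (fun x hx => hx.1)
  set ψ₀ : ℝ → ℝ := fun y => sSup (Lev y) with hψ₀
  have hmem : ∀ y ∈ Set.Ioo 0 b, ψ₀ y ∈ Lev y :=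
    fun y hy => (hLevcp y).sSup_mem (hLevne y hy)
  -- key fact : to the right of ψ₀ y, F > y
  have hkey : ∀ y ∈ Set.Ioo 0 b, ∀ z ∈ Set.Icc (0:ℝ) 1, ψ₀ y < z → y < F z := by
    rintro y hy z hz hzgt
    rcases lt_trichotomy (F z) y with h | h | h
    · exfalso
      have h1 : y ∈ Set.Icc (F z) (F 1) := ⟨h.le, by rw [← hbdef]; exact hy.2.le⟩
      obtain ⟨w, hw, hFw⟩ := intermediate_value_Icc hz.2 hFcont.continuousOn h1
      have hwmem : w ∈ Lev y := ⟨⟨le_trans hz.1 hw.1, hw.2⟩, hFw⟩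
      have h2 : w ≤ ψ₀ y := le_csSup (hLevcp y).bddAbove hwmem
      linarith [hw.1]
    · exfalso
      have hzmem : z ∈ Lev y := ⟨hz, h⟩
      have h2 : z ≤ ψ₀ y := le_csSup (hLevcp y).bddAbove hzmem
      linarith
    · exact h
  -- monotonicity of ψ₀ on (0, b)
  have hmono : ∀ y ∈ Set.Ioo 0 b, ∀ y' ∈ Set.Ioo 0 b, y ≤ y' → ψ₀ y ≤ ψ₀ y' := by
    intro y hy y' hy' hyy
    refine csSup_le (hLevne y hy) ?_
    intro w hw
    by_contra hcon
    push_neg at hcon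
    have := hkey y' hy' w hw.1 hcon
    rw [hw.2] at this
    linarith
  -- subinterval [y₀, y₁] ⊆ (0, b)
  set y₀ : ℝ := b/4 with hy₀def
  set y₁ : ℝ := b/2 with hy₁def
  have hy₀₁ : y₀ < y₁ := by rw [hy₀def, hy₁def]; linarith
  have hIccsub : Set.Icc y₀ y₁ ⊆ Set.Ioo 0 b := by
    rintro z ⟨h1, h2⟩
    constructor
    · rw [hy₀def] at h1; linarith
    · rw [hy₁def] at h2; linarith
  set clamp : ℝ → ℝ := fun y => max y₀ (min y y₁) with hclampdef
  have hclampmem : ∀ y, clamp y ∈ Set.Icc y₀ y₁ :=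
    fun y => ⟨le_max_left _ _, max_le hy₀₁.le (min_le_right _ _)⟩
  have hclampmono : Monotone clamp :=
    fun u v huv => max_le_max le_rfl (min_le_min huv le_rfl)
  have hclampid : ∀ y ∈ Set.Icc y₀ y₁, clamp y = y := by
    rintro y ⟨h1, h2⟩
    rw [hclampdef]
    dsimp only
    rw [min_eq_left h2, max_eq_right h1]
  set ψ : ℝ → ℝ := fun y => ψ₀ (clamp y) with hψdef
  have hψmono : Monotone ψ := fun u v huv =>
    hmono _ (hIccsub (hclampmem u)) _ (hIccsub (hclampmem v)) (hclampmono huv)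
  -- point of the level set as an element of II
  have hmem1 : ∀ y ∈ Set.Ioo 0 b, ψ₀ y ∈ II := fun y hy => (hmem y hy).1
  have hmem2 : ∀ y (hy : y ∈ Set.Ioo 0 b), (f ⟨ψ₀ y, hmem1 y hy⟩ : ℝ) = y := by
    intro y hy
    rw [← hFval ⟨ψ₀ y, hmem1 y hy⟩]
    exact (hmem y hy).2
  -- each such point has Drs ≠ ⊥
  have hnotbot : ∀ y (hy : y ∈ Set.Ioo 0 b), ¬ (Drs f ⟨ψ₀ y, hmem1 y hy⟩ = ⊥) := by
    intro y hy hcon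
    have hge : (0 : EReal) ≤ Drs f ⟨ψ₀ y, hmem1 y hy⟩ := by
      unfold Drs
      refine le_liminf_of_le (h := ?_)
      refine eventually_mem_nhdsWithin.mono ?_
      intro x hx
      have hx' : ψ₀ y < (x : ℝ) := hx
      have hnum : (0:ℝ) ≤ (f x : ℝ) - (f ⟨ψ₀ y, hmem1 y hy⟩ : ℝ) := by
        rw [hmem2 y hy]
        have hk := hkey y hy (x : ℝ) x.2 hx'
        rw [hFval x] at hk
        linarith
      have hden : (0:ℝ) < (x : ℝ) - ((⟨ψ₀ y, hmem1 y hy⟩ : II) : ℝ) := by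
        simpa using sub_pos.2 hx'
      rw [show (0 : EReal) = ((0:ℝ) : EReal) from rfl, EReal.coe_le_coe_iff]
      exact div_nonneg hnum hden.le
    rw [hcon] at hge
    exact absurd (le_bot_iff.1 hge) (by simp)
  -- the image of ψ is contained in a null set
  have hNB : volume {x : II | ¬ (Drs f x = ⊥)} = 0 := ae_iff.1 hae
  set N := toMeasurable volume {x : II | ¬ (Drs f x = ⊥)} with hNdef
  have hN0 : volume N = 0 := by rw [hNdef, measure_toMeasurable]; exact hNB
  have hNmeas : MeasurableSet N := measurableSet_toMeasurable _ _
  have hvalN : volume (Subtype.val '' N) = 0 := by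
    have hcomap := Measure.comap_apply (Subtype.val : II → ℝ) Subtype.coe_injective
      (fun s hs => ((MeasurableEmbedding.subtype_coe measurableSet_Icc).measurableSet_image).2 hs)
      volume hNmeas
    rw [← hcomap]
    rw [← unitInterval.volume_def]
    exact hN0
  have himgnull : volume (ψ '' (Set.Ioo y₀ y₁)) = 0 := by
    refine measure_mono_null ?_ hvalN
    rintro z ⟨y, hy, rfl⟩
    have hyIcc : y ∈ Set.Icc y₀ y₁ := ⟨hy.1.le, hy.2.le⟩
    have hyb : y ∈ Set.Ioo 0 b := hIccsub hyIcc
    have : ψ y = ψ₀ y := by rw [hψdef]; dsimp only; rw [hclampid y hyIcc]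
    rw [this]
    exact ⟨⟨ψ₀ y, hmem1 y hyb⟩, subset_toMeasurable _ _ (hnotbot y hyb), rfl⟩
  -- apply the Dini-derivative-zero lemma
  obtain ⟨y, hyI, hdini⟩ := exists_right_dini_zero ψ hψmono hy₀₁ himgnull
  have hyIcc : y ∈ Set.Icc y₀ y₁ := ⟨hyI.1.le, hyI.2.le⟩
  have hyb : y ∈ Set.Ioo 0 b := hIccsub hyIcc
  set t : II := ⟨ψ₀ y, hmem1 y hyb⟩ with htdef
  have hft : (f t : ℝ) = y := hmem2 y hyb
  have ht1 : (t : ℝ) < 1 := by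
    rcases lt_or_eq_of_le (hmem1 y hyb).2 with h | h
    · exact h
    · exfalso
      have hFy : F 1 = y := by rw [← h]; exact (hmem y hyb).2
      have hby : b = y := by rw [hbdef, hFy]
      have h2 : y < b/2 := hy₁def ▸ hyI.2
      linarith
  haveI := nebot_right t ht1
  have hDrs : Drs f t = ⊤ := by
    apply ereal_eq_top_of_forall
    intro M hM
    unfold Drs
    refine le_liminf_of_le (h := ?_)
    -- find the neighborhood
    obtain ⟨δ, hδ0, hδ⟩ := hdini M hM
    obtain ⟨ε₁, hε₁0, hε₁⟩ := Metric.continuousAt_iff.1 (hf.continuousAt (x := t))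
      (min δ (y₁ - y)) (lt_min hδ0 (by linarith [hyI.2]))
    rw [Filter.eventually_iff, mem_nhdsWithin_iff_exists_mem_nhds_inter]
    refine ⟨Metric.ball t (min ε₁ ((y₁ - y)/M)), Metric.ball_mem_nhds _ (lt_min hε₁0 (by
      have : 0 < y₁ - y := by linarith [hyI.2]
      positivity)), ?_⟩
    rintro x ⟨hxball, hxIoi⟩
    simp only [Set.mem_setOf_eq]
    have hxgt : (t : ℝ) < (x : ℝ) := hxIoi
    have hd0 : (0:ℝ) < (x : ℝ) - (t : ℝ) := sub_pos.2 hxgt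
    have hdist : dist x t < min ε₁ ((y₁ - y)/M) := Metric.mem_ball.1 hxball
    have hdis : (x : ℝ) - (t : ℝ) < min ε₁ ((y₁ - y)/M) := by
      rw [Subtype.dist_eq, Real.dist_eq, abs_of_pos hd0] at hdist
      exact hdist
    set v : ℝ := (f x : ℝ) with hvdef
    have hvy : y < v := by
      rw [hvdef, ← hFval x]
      exact hkey y hyb (x : ℝ) x.2 hxgt
    have hQ : ((((f x : ℝ) - (f t : ℝ)) / ((x : ℝ) - (t : ℝ)) : ℝ) : EReal)
        = (((v - y) / ((x : ℝ) - (t : ℝ)) : ℝ) : EReal) := by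
      rw [hft, hvdef]
    rw [hQ]
    rw [show (M : EReal) = ((M:ℝ) : EReal) from rfl, EReal.coe_le_coe_iff]
    rcases lt_or_ge v y₁ with hv1 | hv1
    · -- small case : use the Dini bound
      set k : ℝ := v - y with hkdef
      have hk0 : 0 < k := by rw [hkdef]; linarith
      have hkδ : k < δ := by
        have h2 := hε₁ (lt_of_lt_of_le hdist (min_le_left _ _))
        rw [Subtype.dist_eq, Real.dist_eq, ← hvdef, hft] at h2
        have := lt_of_abs_lt h2
        rw [hkdef]
        exact lt_of_lt_of_le (by linarith [le_abs_self (v - y)]) (min_le_left _ _)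
      have hvIcc : v ∈ Set.Icc y₀ y₁ := ⟨by linarith [hyI.1], hv1.le⟩
      have hψv : ψ (y + k) = ψ₀ v := by
        rw [hψdef]
        dsimp only
        rw [show y + k = v by rw [hkdef]; ring, hclampid v hvIcc]
      have hψy : ψ y = ψ₀ y := by
        rw [hψdef]; dsimp only; rw [hclampid y hyIcc]
      have hxle : (x : ℝ) ≤ ψ₀ v := by
        refine le_csSup (hLevcp v).bddAbove ⟨x.2, ?_⟩
        rw [hFval x, ← hvdef]
      have hchain : (x : ℝ) - (t : ℝ) ≤ k / M := by
        have h3 := hδ k hk0 hkδ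
        rw [hψv, hψy] at h3
        have : (t : ℝ) = ψ₀ y := rfl
        linarith [hxle]
      rw [le_div_iff₀ hd0]
      calc M * ((x:ℝ) - (t:ℝ)) ≤ M * (k / M) := by
            exact mul_le_mul_of_nonneg_left hchain hM.le
        _ = k := by field_simp
        _ = v - y := hkdef
    · -- large case : the increment is bounded below
      have h4 : (x : ℝ) - (t : ℝ) < (y₁ - y)/M := lt_of_lt_of_le hdis (min_le_right _ _)
      rw [le_div_iff₀ hd0]
      have hlt : M * ((x:ℝ) - (t:ℝ)) < v - y :=
        calc M * ((x:ℝ) - (t:ℝ)) < M * ((y₁ - y)/M) := mul_lt_mul_of_pos_left h4 hM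
          _ = y₁ - y := by field_simp
          _ ≤ v - y := by linarith
      exact hlt.le
  have hDRs : DRs f t = ⊤ := by
    have hle : Drs f t ≤ DRs f t := liminf_le_limsup
    rw [hDrs] at hle
    exact top_unique hle
  exact ⟨t, ht1, by rw [hDrs, hDRs]⟩

lemma not_besicovitch (f : C(II, II)) (hsurj : Function.Surjective f)
    (hae : ∀ᵐ x : II, DRs ⇑f x = ⊤ ∧ Drs ⇑f x = ⊥) : ¬ Besicovitch ⇑f := by
  intro hB
  rcases eq_or_lt_of_le (f ⟨1, by norm_num⟩).2.1 with h0 | hpos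
  · -- f(1) = 0 : apply the core lemma to 1 - f
    set f' : II → II := fun x => ⟨1 - (f x : ℝ),
      ⟨by linarith [(f x).2.2], by linarith [(f x).2.1]⟩⟩ with hf'def
    have hf'c : Continuous f' :=
      Continuous.subtype_mk (continuous_const.sub (continuous_subtype_val.comp f.continuous)) _
    have hf's : Function.Surjective f' := by
      intro v
      obtain ⟨u, hu⟩ := hsurj ⟨1 - (v : ℝ), ⟨by linarith [v.2.2], by linarith [v.2.1]⟩⟩
      refine ⟨u, Subtype.ext ?_⟩
      show 1 - (f u : ℝ) = (v : ℝ)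
      rw [hu]
      show 1 - (1 - (v:ℝ)) = (v:ℝ)
      ring
    have hneg : ∀ t : II, (fun x : II => ((((f' x : ℝ) - (f' t : ℝ)) / ((x:ℝ) - (t:ℝ)) : ℝ) : EReal))
        = -(fun x : II => ((((f x : ℝ) - (f t : ℝ)) / ((x:ℝ) - (t:ℝ)) : ℝ) : EReal)) := by
      intro t; funext x
      rw [Pi.neg_apply, ← EReal.coe_neg]
      congr 1
      show ((1 - (f x : ℝ)) - (1 - (f t : ℝ))) / ((x:ℝ) - (t:ℝ)) = _
      ring
    have hDrs' : ∀ t, Drs f' t = - DRs ⇑f t := by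
      intro t; unfold Drs DRs; rw [hneg t, EReal.liminf_neg]
    have hDRs' : ∀ t, DRs f' t = - Drs ⇑f t := by
      intro t; unfold Drs DRs; rw [hneg t, EReal.limsup_neg]
    have hae' : ∀ᵐ x : II, Drs f' x = ⊥ :=
      hae.mono (fun x hx => by rw [hDrs' x, hx.1]; rfl)
    have hb0' : 0 < (f' ⟨1, by norm_num⟩ : ℝ) := by
      show 0 < 1 - (f ⟨1, by norm_num⟩ : ℝ)
      rw [← h0]
      norm_num
    obtain ⟨t, ht1, heq⟩ := core f' hf'c hf's hae' hb0'
    apply hB.1 t ht1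
    have h1 : DRs ⇑f t = - Drs f' t := by rw [hDrs' t, neg_neg]
    have h2 : Drs ⇑f t = - DRs f' t := by rw [hDRs' t, neg_neg]
    rw [h1, h2, heq]
  · obtain ⟨t, ht1, heq⟩ := core ⇑f f.continuous hsurj (hae.mono fun x hx => hx.2) hpos
    exact hB.1 t ht1 heq


/-- Given that the functions in `C(λ)` having a knot point at λ-a.e. point form a residual
set, the set of Besicovitch functions in `C(λ)` is meager. -/
theorem stmt13
    (hres : {g : Clam | ∀ᵐ x : II, DRs (⇑g.1) x = ⊤ ∧ DLs (⇑g.1) x = ⊤ ∧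
        Drs (⇑g.1) x = ⊥ ∧ Dls (⇑g.1) x = ⊥} ∈ residual Clam) :
    IsMeagre {g : Clam | Besicovitch (⇑g.1)} := by
  show {g : Clam | Besicovitch (⇑g.1)}ᶜ ∈ residual Clam
  refine Filter.mem_of_superset hres ?_
  intro g hg
  have hg' : ∀ᵐ x : II, DRs (⇑g.1) x = ⊤ ∧ DLs (⇑g.1) x = ⊤ ∧
      Drs (⇑g.1) x = ⊥ ∧ Dls (⇑g.1) x = ⊥ := hg
  show ¬ Besicovitch (⇑g.1)
  exact not_besicovitch g.1 g.2.1 (hg'.mono fun x hx => ⟨hx.1, hx.2.2.1⟩)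
end
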